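/- arXiv:2309.01223 — 12 statements merged into one kernel-verified Lean document; each statement's English description precedes it below -/
import Mathlib

section
/- For all topological abelian groups G and H, there exist a topological abelian group T and a continuous bihomomorphism ⊗ : G × H → T such that for every topological abelian group A and every continuous bihomomorphism b : G × H → A there exists a unique continuous group homomorphism b̃ : T → A with b̃ ∘ ⊗ = b. -/
/-- A map `b : G × H → A` between topological abelian groups is a *continuous
bihomomorphism* if for each fixed `h` the map `g ↦ b (g, h)` is a continuous group
homomorphism, for each fixed `g` the map `h ↦ b (g, h)` is a continuous group
homomorphism, and `b` is continuous at `(0, 0)`. -/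
def IsContBihom {G H A : Type*} [AddCommGroup G] [AddCommGroup H] [AddCommGroup A]
    [TopologicalSpace G] [TopologicalSpace H] [TopologicalSpace A] (b : G × H → A) : Prop :=
  (∀ h : H, Continuous fun g : G => b (g, h)) ∧
  (∀ (h : H) (g₁ g₂ : G), b (g₁ + g₂, h) = b (g₁, h) + b (g₂, h)) ∧
  (∀ g : G, Continuous fun h : H => b (g, h)) ∧
  (∀ (g : G) (h₁ h₂ : H), b (g, h₁ + h₂) = b (g, h₁) + b (g, h₂)) ∧
  ContinuousAt b (0, 0)

universe u v w

open scoped TensorProduct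

section Aux

variable {G : Type u} {H : Type v}
    [AddCommGroup G] [TopologicalSpace G] [IsTopologicalAddGroup G]
    [AddCommGroup H] [TopologicalSpace H] [IsTopologicalAddGroup H]

/-- The canonical bilinear map into the tensor product. -/
noncomputable def tmapAux : G × H → TensorProduct ℤ G H := fun p => p.1 ⊗ₜ[ℤ] p.2

/-- The set of group topologies on the tensor product making `tmapAux` a continuous
bihomomorphism. -/
def goodTops : Set (AddGroupTopology (TensorProduct ℤ G H)) :=
  {τ | @IsContBihom G H (TensorProduct ℤ G H) _ _ _ _ _ τ.toTopologicalSpace tmapAux}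

/-- The candidate topology: the finest group topology making `tmapAux` a continuous
bihomomorphism. -/
def tensTop : AddGroupTopology (TensorProduct ℤ G H) := sInf goodTops

lemma tmapAux_isContBihom :
    @IsContBihom G H (TensorProduct ℤ G H) _ _ _ _ _
      (tensTop (G := G) (H := H)).toTopologicalSpace tmapAux := by
  have hts : (tensTop (G := G) (H := H)).toTopologicalSpace
      = sInf (AddGroupTopology.toTopologicalSpace '' goodTops) := rfl
  refine ⟨?_, ?_, ?_, ?_, ?_⟩
  · intro h
    rw [hts, continuous_sInf_rng]
    rintro _ ⟨τ, hτ, rfl⟩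
    exact hτ.1 h
  · intro h g₁ g₂
    simp [tmapAux, TensorProduct.add_tmul]
  · intro g
    rw [hts, continuous_sInf_rng]
    rintro _ ⟨τ, hτ, rfl⟩
    exact hτ.2.2.1 g
  · intro g h₁ h₂
    simp [tmapAux, TensorProduct.tmul_add]
  · show Filter.Tendsto tmapAux (nhds (0, 0))
      (@nhds _ (tensTop (G := G) (H := H)).toTopologicalSpace (tmapAux (0, 0)))
    rw [hts, @nhds_sInf _ (AddGroupTopology.toTopologicalSpace '' goodTops),
      Filter.tendsto_iInf]
    intro t
    rw [Filter.tendsto_iInf]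
    rintro ⟨τ, hτ, rfl⟩
    exact hτ.2.2.2.2

end Aux

/-- The category of all topological abelian groups has tensor products, and the induced
homomorphism out of the tensor product is unique. -/
theorem stmt0 (G : Type u) (H : Type v)
    [AddCommGroup G] [TopologicalSpace G] [IsTopologicalAddGroup G]
    [AddCommGroup H] [TopologicalSpace H] [IsTopologicalAddGroup H] :
    ∃ (T : Type (max u v)) (_ : AddCommGroup T) (_ : TopologicalSpace T)
      (_ : IsTopologicalAddGroup T) (tmap : G × H → T),
      IsContBihom tmap ∧
      ∀ (A : Type w) (_ : AddCommGroup A) (_ : TopologicalSpace A)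
        (_ : IsTopologicalAddGroup A) (b : G × H → A), IsContBihom b →
          ∃! bt : T →+ A, Continuous bt ∧ ∀ p : G × H, bt (tmap p) = b p := by
  classical
  refine ⟨TensorProduct ℤ G H, inferInstance,
    (tensTop (G := G) (H := H)).toTopologicalSpace,
    (tensTop (G := G) (H := H)).toIsTopologicalAddGroup,
    tmapAux, tmapAux_isContBihom, ?_⟩
  intro A _ tA _ b hb
  obtain ⟨hc1, ha1, hc2, ha2, hc0⟩ := hb
  -- the algebraic lift
  let L : G →+ (H →+ A) := AddMonoidHom.mk'
    (fun g => AddMonoidHom.mk' (fun h => b (g, h)) (ha2 g))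
    (by intro g₁ g₂; ext h; exact ha1 h g₁ g₂)
  have hsmul : ∀ (r : ℤ) (g : G) (h : H), L (r • g) h = L g (r • h) := by
    intro r g h
    have h1 : (r • (L g)) h = r • (L g h) := rfl
    rw [map_zsmul L r g, h1, ← map_zsmul (L g) r h]
  let bt : TensorProduct ℤ G H →+ A := TensorProduct.liftAddHom L hsmul
  have hbt : ∀ p : G × H, bt (tmapAux p) = b p := by
    intro p
    simp only [bt, tmapAux, TensorProduct.liftAddHom_tmul]
    rfl
  -- continuity of bt
  have hbt0 : bt 0 = 0 := map_zero bt
  have hb00 : b (0, 0) = 0 := by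
    rw [← hbt (0, 0)]
    simp only [tmapAux, TensorProduct.zero_tmul, map_zero]
  let tInd : TopologicalSpace (TensorProduct ℤ G H) := tA.induced bt
  haveI hgInd : @IsTopologicalAddGroup (TensorProduct ℤ G H) tInd _ :=
    topologicalAddGroup_induced bt
  let τb : AddGroupTopology (TensorProduct ℤ G H) :=
    { toTopologicalSpace := tInd, toIsTopologicalAddGroup := hgInd }
  have hτb : τb ∈ goodTops (G := G) (H := H) := by
    refine ⟨?_, ?_, ?_, ?_, ?_⟩
    · intro h
      rw [continuous_induced_rng]
      exact hc1 h
    · intro h g₁ g₂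
      simp [tmapAux, TensorProduct.add_tmul]
    · intro g
      rw [continuous_induced_rng]
      exact hc2 g
    · intro g h₁ h₂
      simp [tmapAux, TensorProduct.tmul_add]
    · show Filter.Tendsto tmapAux (nhds (0, 0)) (@nhds _ tInd (tmapAux (0, 0)))
      rw [@nhds_induced _ _ tA bt, Filter.tendsto_comap_iff]
      have : (⇑bt ∘ tmapAux) = b := funext hbt
      rw [this, hbt (0, 0)]
      exact hc0
  have hle : (tensTop (G := G) (H := H)).toTopologicalSpace ≤ tInd :=
    AddGroupTopology.toTopologicalSpace_le.2 (sInf_le hτb)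
  have hcont : @Continuous _ _ (tensTop (G := G) (H := H)).toTopologicalSpace tA bt := (@continuous_iff_le_induced _ _ (⇑bt) (tensTop (G := G) (H := H)).toTopologicalSpace tA).2 hle
  refine ⟨bt, ⟨hcont, hbt⟩, ?_⟩
  -- uniqueness
  rintro f ⟨-, hf⟩
  ext x
  induction x using TensorProduct.induction_on with
  | zero => simp
  | tmul g h => rw [show g ⊗ₜ[ℤ] h = tmapAux (g, h) from rfl, hf, hbt]
  | add x y hx hy => rw [map_add, map_add, hx, hy]
end

section
/- Let P be a nonempty class of topological abelian groups that is closed under taking arbitrary subgroups (with the subspace topology) and arbitrary topological products. Then P has tensor product: for all G and H belonging to P there exist T belonging to P and a continuous bihomomorphism ⊗_P : G × H → T such that for every B belonging to P and every continuous bihomomorphism b : G × H → B there exists a unique continuous group homomorphism b' : T → B with b' ∘ ⊗_P = b. -/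
universe u

section Aux

/-- Composing a continuous bihomomorphism with a continuous additive map. -/
theorem IsContBihom.compLeft {G H A B : Type*} [AddCommGroup G] [AddCommGroup H]
    [AddCommGroup A] [AddCommGroup B] [TopologicalSpace G] [TopologicalSpace H]
    [TopologicalSpace A] [TopologicalSpace B] {b : G × H → A} (hb : IsContBihom b)
    (e : A → B) (he : Continuous e) (hadd : ∀ x y, e (x + y) = e x + e y) :
    IsContBihom (fun p => e (b p)) := by
  obtain ⟨h1, h2, h3, h4, h5⟩ := hb
  refine ⟨fun h => he.comp (h1 h), fun h g₁ g₂ => ?_,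
    fun g => he.comp (h3 g), fun g h₁ h₂ => ?_,
    he.continuousAt.comp h5⟩
  · show e (b (g₁ + g₂, h)) = e (b (g₁, h)) + e (b (g₂, h))
    rw [h2, hadd]
  · show e (b (g, h₁ + h₂)) = e (b (g, h₁)) + e (b (g, h₂))
    rw [h4, hadd]

/-- Restricting the codomain of a continuous bihomomorphism to a subgroup. -/
theorem IsContBihom.codRestrict {G H A : Type*} [AddCommGroup G] [AddCommGroup H]
    [AddCommGroup A] [TopologicalSpace G] [TopologicalSpace H] [TopologicalSpace A]
    {b : G × H → A} (hb : IsContBihom b) (S : AddSubgroup A) (hmem : ∀ p, b p ∈ S) :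
    IsContBihom (fun p => (⟨b p, hmem p⟩ : S)) := by
  obtain ⟨h1, h2, h3, h4, h5⟩ := hb
  refine ⟨fun h => (h1 h).subtype_mk _, fun h g₁ g₂ => by ext; exact h2 h g₁ g₂,
    fun g => (h3 g).subtype_mk _, fun g h₁ h₂ => by ext; exact h4 g h₁ h₂, ?_⟩
  exact tendsto_subtype_rng.mpr h5

/-- Two additive homomorphisms from a subgroup generated by a set agree if they agree
on the generating set. -/
theorem addHom_ext_on_closure {A B : Type*} [AddCommGroup A] [AddCommGroup B] {s : Set A}
    {f g : ↥(AddSubgroup.closure s) →+ B}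
    (h : ∀ x (hx : x ∈ s),
      f ⟨x, AddSubgroup.subset_closure hx⟩ = g ⟨x, AddSubgroup.subset_closure hx⟩) :
    f = g := by
  ext ⟨x, hx⟩
  induction hx using AddSubgroup.closure_induction with
  | mem x hxs => exact h x hxs
  | zero => show f 0 = g 0; simp
  | add x y hxc hyc ihx ihy =>
      have hxy : (⟨x + y, add_mem hxc hyc⟩ : ↥(AddSubgroup.closure s)) = ⟨x, hxc⟩ + ⟨y, hyc⟩ :=
        rfl
      rw [hxy, map_add, map_add, ihx, ihy]
  | neg x hxc ih =>
      have hx : (⟨-x, neg_mem hxc⟩ : ↥(AddSubgroup.closure s)) = -⟨x, hxc⟩ := rfl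
      rw [hx, map_neg, map_neg, ih]

variable (P : ∀ (G : Type u) [AddCommGroup G] [TopologicalSpace G] [IsTopologicalAddGroup G], Prop)

/-- A witness that `X` is topologically isomorphic to a member of the class `P`. -/
structure IsoRep (X : Type u) [AddCommGroup X] [TopologicalSpace X] : Type (u + 1) where
  Y : Type u
  grp : AddCommGroup Y
  top : TopologicalSpace Y
  tgrp : @IsTopologicalAddGroup Y top grp.toAddGroup
  hP : @P Y grp top tgrp
  e : X ≃+ Y
  he : Continuous e
  hes : Continuous e.symm

/-- The isomorphism-closure of the class `P`. -/
def PP (X : Type u) [AddCommGroup X] [TopologicalSpace X] : Prop :=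
  Nonempty (IsoRep P X)

theorem PP_of_P (X : Type u) [AddCommGroup X] [TopologicalSpace X] [IsTopologicalAddGroup X]
    (h : P X) : PP P X :=
  ⟨⟨X, ‹_›, ‹_›, ‹_›, h, AddEquiv.refl X, continuous_id, by simpa using (continuous_id : Continuous (id : X → X))⟩⟩

theorem PP_congr {X Z : Type u} [AddCommGroup X] [TopologicalSpace X]
    [AddCommGroup Z] [TopologicalSpace Z] (e : X ≃+ Z) (he : Continuous e)
    (hes : Continuous e.symm) (h : PP P Z) : PP P X := by
  obtain ⟨r⟩ := h
  letI := r.grp; letI := r.top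
  exact ⟨⟨r.Y, r.grp, r.top, r.tgrp, r.hP, e.trans r.e, r.he.comp he,
    hes.comp r.hes⟩⟩

theorem PP_sub
    (hsub : ∀ (G : Type u) [AddCommGroup G] [TopologicalSpace G] [IsTopologicalAddGroup G],
      P G → ∀ S : AddSubgroup G, P ↥S)
    {X : Type u} [AddCommGroup X] [TopologicalSpace X]
    (h : PP P X) (S : AddSubgroup X) : PP P ↥S := by
  obtain ⟨r⟩ := h
  letI := r.grp; letI := r.top; letI := r.tgrp
  refine ⟨⟨↥(S.map r.e.toAddMonoidHom), inferInstance, inferInstance, inferInstance,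
    hsub _ r.hP _, r.e.addSubgroupMap S, ?_, ?_⟩⟩
  · have : ⇑(r.e.addSubgroupMap S) = fun x : S =>
        (⟨r.e x, AddSubgroup.mem_map_of_mem _ x.2⟩ : ↥(S.map r.e.toAddMonoidHom)) := by
      funext x; rfl
    exact ((r.he.comp continuous_subtype_val).subtype_mk _).congr
      (fun x => (congrFun this x).symm)
  · have : ⇑(r.e.addSubgroupMap S).symm = fun x : ↥(S.map r.e.toAddMonoidHom) =>
        (⟨r.e.symm x, by
          obtain ⟨y, hy, hxy⟩ := x.2
          simpa [← hxy] using hy⟩ : ↥S) := by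
      funext x
      apply Subtype.ext
      show ((r.e.addSubgroupMap S).symm x : X) = r.e.symm x
      obtain ⟨y, hy, hxy⟩ := x.2
      rw [AddEquiv.addSubgroupMap_symm_apply]
    exact ((r.hes.comp continuous_subtype_val).subtype_mk _).congr
      (fun x => (congrFun this x).symm)

theorem PP_prod
    (hprod : ∀ (ι : Type u) (f : ι → Type u) [∀ i, AddCommGroup (f i)]
      [∀ i, TopologicalSpace (f i)] [∀ i, IsTopologicalAddGroup (f i)],
      (∀ i, P (f i)) → P (∀ i, f i))
    {ι : Type u} {f : ι → Type u} [∀ i, AddCommGroup (f i)] [∀ i, TopologicalSpace (f i)]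
    (h : ∀ i, PP P (f i)) : PP P (∀ i, f i) := by
  have r := fun i => (h i).some
  letI : ∀ i, AddCommGroup (r i).Y := fun i => (r i).grp
  letI : ∀ i, TopologicalSpace (r i).Y := fun i => (r i).top
  haveI : ∀ i, IsTopologicalAddGroup (r i).Y := fun i => (r i).tgrp
  refine ⟨⟨∀ i, (r i).Y, inferInstance, inferInstance, inferInstance,
    hprod _ _ (fun i => (r i).hP), AddEquiv.piCongrRight (fun i => (r i).e), ?_, ?_⟩⟩
  · exact continuous_pi fun i => (r i).he.comp (continuous_apply i)
  · have : ⇑(AddEquiv.piCongrRight fun i => (r i).e).symm =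
        fun x (i : ι) => (r i).e.symm (x i) := by funext x i; rfl
    exact (continuous_pi fun i => (r i).hes.comp (continuous_apply i)).congr
      (fun x => (congrFun this x).symm)

variable (G H : Type u) [AddCommGroup G] [TopologicalSpace G]
  [AddCommGroup H] [TopologicalSpace H]

/-- The index type: all possible bihomomorphism targets (up to isomorphism) realized as
quotients of the free abelian group on `G × H`. -/
structure Idx : Type u where
  s : Setoid (FreeAbelianGroup (G × H))
  grp : AddCommGroup (Quotient s)
  top : TopologicalSpace (Quotient s)
  tgrp : @IsTopologicalAddGroup (Quotient s) top grp.toAddGroup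
  hP : @PP P (Quotient s) grp top
  b : G × H → Quotient s
  hb : @IsContBihom G H (Quotient s) _ _ grp _ _ top b

variable {P G H}

/-- The underlying type of an index. -/
def IdxTy (i : Idx P G H) : Type u := Quotient i.s

instance (i : Idx P G H) : AddCommGroup (IdxTy i) := i.grp
instance (i : Idx P G H) : TopologicalSpace (IdxTy i) := i.top
instance (i : Idx P G H) : IsTopologicalAddGroup (IdxTy i) := i.tgrp

theorem IdxTy.hP (i : Idx P G H) : PP P (IdxTy i) := i.hP

/-- The bihomomorphism attached to an index. -/
def Idx.bmap (i : Idx P G H) : G × H → IdxTy i := i.b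

theorem Idx.hbmap (i : Idx P G H) : IsContBihom i.bmap := i.hb

/-- Every continuous bihomomorphism into a group in the isomorphism-closure of `P`
factors through some index. -/
theorem exists_idx
    (hsub : ∀ (G : Type u) [AddCommGroup G] [TopologicalSpace G] [IsTopologicalAddGroup G],
      P G → ∀ S : AddSubgroup G, P ↥S)
    (B : Type u) [AddCommGroup B] [TopologicalSpace B] [IsTopologicalAddGroup B]
    (hB : PP P B) (b : G × H → B) (hb : IsContBihom b) :
    ∃ (i : Idx P G H) (e : IdxTy i →+ B), Continuous e ∧ ∀ p, e (i.bmap p) = b p := by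
  classical
  set S : AddSubgroup B := AddSubgroup.closure (Set.range b) with hS
  have hmem : ∀ p, b p ∈ S := fun p => AddSubgroup.subset_closure ⟨p, rfl⟩
  set φ : FreeAbelianGroup (G × H) →+ ↥S :=
    FreeAbelianGroup.lift (fun p => (⟨b p, hmem p⟩ : ↥S)) with hφ
  have hφof : ∀ p, φ (FreeAbelianGroup.of p) = ⟨b p, hmem p⟩ := fun p =>
    FreeAbelianGroup.lift_apply_of _ _
  have hsurj : Function.Surjective φ := by
    rintro ⟨x, hx⟩
    have : ∃ z, (φ z : B) = x := by
      induction hx using AddSubgroup.closure_induction with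
      | mem x hxs =>
          obtain ⟨p, rfl⟩ := hxs
          exact ⟨FreeAbelianGroup.of p, by rw [hφof]⟩
      | zero => exact ⟨0, by simp⟩
      | add x y _ _ ihx ihy =>
          obtain ⟨z1, h1⟩ := ihx; obtain ⟨z2, h2⟩ := ihy
          exact ⟨z1 + z2, by simp [h1, h2]⟩
      | neg x _ ih =>
          obtain ⟨z, h1⟩ := ih
          exact ⟨-z, by simp [h1]⟩
    obtain ⟨z, hz⟩ := this
    exact ⟨z, Subtype.ext hz⟩
  set s : Setoid (FreeAbelianGroup (G × H)) := Setoid.ker φ with hs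
  set q : Quotient s ≃ ↥S := Setoid.quotientKerEquivOfSurjective φ hsurj with hq
  letI grp : AddCommGroup (Quotient s) := q.addCommGroup
  set E : Quotient s ≃+ ↥S := q.addEquiv with hE
  letI top : TopologicalSpace (Quotient s) := .induced E inferInstance
  haveI tgrp : IsTopologicalAddGroup (Quotient s) := topologicalAddGroup_induced E.toAddMonoidHom
  have hEc : Continuous E := continuous_induced_dom
  have hEsc : Continuous E.symm := by
    rw [continuous_induced_rng]
    simp only [Function.comp_def, AddEquiv.apply_symm_apply]; exact continuous_id
  have hPQ : PP P (Quotient s) := PP_congr P E hEc hEsc (PP_sub P hsub hB S)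
  have hbS : IsContBihom (fun p => (⟨b p, hmem p⟩ : ↥S)) := hb.codRestrict S hmem
  have hbQ : IsContBihom (fun p => E.symm (⟨b p, hmem p⟩ : ↥S)) :=
    hbS.compLeft E.symm hEsc (map_add E.symm)
  refine ⟨⟨s, grp, top, tgrp, hPQ, fun p => E.symm ⟨b p, hmem p⟩, hbQ⟩,
    S.subtype.comp E.toAddMonoidHom, ?_, ?_⟩
  · exact continuous_subtype_val.comp hEc
  · intro p
    show (E (E.symm ⟨b p, hmem p⟩) : B) = b p
    rw [AddEquiv.apply_symm_apply]

end Aux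

/-- Every nonempty class of topological abelian groups that is closed under taking arbitrary
subgroups (with the subspace topology) and arbitrary topological products has tensor products. -/
theorem stmt1
    (P : ∀ (G : Type u) [AddCommGroup G] [TopologicalSpace G] [IsTopologicalAddGroup G], Prop)
    (hne : ∃ (G : Type u) (_ : AddCommGroup G) (_ : TopologicalSpace G)
      (_ : IsTopologicalAddGroup G), P G)
    (hsub : ∀ (G : Type u) [AddCommGroup G] [TopologicalSpace G] [IsTopologicalAddGroup G],
      P G → ∀ S : AddSubgroup G, P ↥S)
    (hprod : ∀ (ι : Type u) (f : ι → Type u) [∀ i, AddCommGroup (f i)]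
      [∀ i, TopologicalSpace (f i)] [∀ i, IsTopologicalAddGroup (f i)],
      (∀ i, P (f i)) → P (∀ i, f i)) :
    ∀ (G H : Type u) [AddCommGroup G] [TopologicalSpace G] [IsTopologicalAddGroup G]
      [AddCommGroup H] [TopologicalSpace H] [IsTopologicalAddGroup H], P G → P H →
      ∃ (T : Type u) (_ : AddCommGroup T) (_ : TopologicalSpace T)
        (_ : IsTopologicalAddGroup T), P T ∧
        ∃ tmap : G × H → T, IsContBihom tmap ∧
          ∀ (B : Type u) (_ : AddCommGroup B) (_ : TopologicalSpace B)
            (_ : IsTopologicalAddGroup B), P B → ∀ b : G × H → B, IsContBihom b →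
              ∃! b' : T →+ B, Continuous b' ∧ ∀ p : G × H, b' (tmap p) = b p := by
  intro G H _ _ _ _ _ _ hG hH
  classical
  -- the big product over all indices
  set Φ : G × H → ∀ i : Idx P G H, IdxTy i := fun p i => i.bmap p with hΦ
  have hΦbihom : IsContBihom Φ := by
    refine ⟨fun h => continuous_pi fun i => (i.hbmap.1 h), ?_,
      fun g => continuous_pi fun i => (i.hbmap.2.2.1 g), ?_, ?_⟩
    · intro h g₁ g₂; funext i; exact i.hbmap.2.1 h g₁ g₂
    · intro g h₁ h₂; funext i; exact i.hbmap.2.2.2.1 g h₁ h₂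
    · exact continuousAt_pi.mpr fun i => i.hbmap.2.2.2.2
  set TT : AddSubgroup (∀ i : Idx P G H, IdxTy i) := AddSubgroup.closure (Set.range Φ) with hTT
  have hmemTT : ∀ p, Φ p ∈ TT := fun p => AddSubgroup.subset_closure ⟨p, rfl⟩
  set tmap0 : G × H → ↥TT := fun p => ⟨Φ p, hmemTT p⟩ with htmap0
  have htmap0bihom : IsContBihom tmap0 := hΦbihom.codRestrict TT hmemTT
  -- the subgroup generated by the image is in the iso-closure of P
  have hPTT : PP P ↥TT :=
    PP_sub P hsub (PP_prod P hprod fun i => IdxTy.hP i) TT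
  obtain ⟨r⟩ := hPTT
  letI := r.grp; letI := r.top; haveI := r.tgrp
  refine ⟨r.Y, inferInstance, inferInstance, inferInstance, r.hP,
    fun p => r.e (tmap0 p), htmap0bihom.compLeft r.e r.he (map_add r.e), ?_⟩
  intro B _ _ _ hB b hb
  obtain ⟨i, e, hec, heb⟩ := exists_idx hsub B (PP_of_P P B hB) b hb
  -- the candidate factorization
  refine ⟨(e.comp ((Pi.evalAddMonoidHom (fun i : Idx P G H => IdxTy i) i).comp
    TT.subtype)).comp r.e.symm.toAddMonoidHom, ⟨?_, ?_⟩, ?_⟩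
  · exact (hec.comp ((continuous_apply i).comp continuous_subtype_val)).comp r.hes
  · intro p
    show e ((r.e.symm (r.e (tmap0 p)) : ∀ i, IdxTy i) i) = b p
    rw [AddEquiv.symm_apply_apply]
    exact heb p
  · rintro c ⟨-, hc⟩
    have key : c.comp r.e.toAddMonoidHom =
        ((e.comp ((Pi.evalAddMonoidHom (fun i : Idx P G H => IdxTy i) i).comp
          TT.subtype)).comp r.e.symm.toAddMonoidHom).comp r.e.toAddMonoidHom := by
      apply addHom_ext_on_closure
      rintro x ⟨p, rfl⟩
      have h1 : (⟨Φ p, AddSubgroup.subset_closure ⟨p, rfl⟩⟩ : ↥TT) = tmap0 p := rfl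
      simp only [AddMonoidHom.coe_comp, Function.comp_apply, AddEquiv.coe_toAddMonoidHom,
        h1]
      rw [hc p]
      show b p = e ((r.e.symm (r.e (tmap0 p)) : ∀ i, IdxTy i) i)
      rw [AddEquiv.symm_apply_apply]
      exact (heb p).symm
    ext y
    have := DFunLike.congr_fun key (r.e.symm y)
    simpa using this
end

section
/- Let t ∈ 𝕋^I. The homomorphism χ_t : H → 𝕋 is continuous if and only if there exists a finite subset {x_1, …, x_m} ⊆ ℤ^I such that for every g ∈ H, if ⟨g,x_j⟩ = 0 for all 1 ≤ j ≤ m, then ⟨g,t⟩ = 0. -/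
/-- The circle group `𝕋 = ℝ/ℤ`. -/
abbrev Circ : Type := AddCircle (1 : ℝ)

/-- For `g ∈ ℤ^(I)` (finitely supported) and `x ∈ ℤ^I`, the pairing `⟨g,x⟩ = ∑ g i * x i`. -/
def pairZ {I : Type*} (g : I →₀ ℤ) (x : I → ℤ) : ℤ := g.sum fun i n => n * x i

/-- The topology of pointwise convergence on `ℤ^I`: the coarsest topology on `H = ℤ^(I)`
making `g ↦ ⟨g,x⟩` continuous into the discrete group `ℤ`, for every `x ∈ ℤ^I`. -/
instance HZtop (I : Type*) : TopologicalSpace (I →₀ ℤ) :=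
  TopologicalSpace.induced (fun g (x : I → ℤ) => pairZ g x) Pi.topologicalSpace

/-- For `g ∈ ℤ^(I)` and `t ∈ 𝕋^I`, the (finite) sum `⟨g,t⟩ = ∑ g i • t i ∈ 𝕋`. -/
noncomputable def pairT {I : Type*} (g : I →₀ ℤ) (t : I → Circ) : Circ :=
  g.sum fun i n => n • t i

lemma pairZ_eq {I : Type*} (g : I →₀ ℤ) (x : I → ℤ) :
    pairZ g x = Finsupp.linearCombination ℤ x g := by
  rw [Finsupp.linearCombination_apply]; rfl

lemma pairT_eq {I : Type*} (g : I →₀ ℤ) (t : I → Circ) :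
    pairT g t = Finsupp.linearCombination ℤ t g := by
  rw [Finsupp.linearCombination_apply]; rfl

/-- Key lemma: if every integer multiple of `s : 𝕋` has norm `< 1/4`, then `s = 0`. -/
lemma eq_zero_of_forall_norm_zsmul_lt (s : Circ) (h : ∀ n : ℤ, ‖n • s‖ < 1/4) : s = 0 := by
  induction s using QuotientAddGroup.induction_on with
  | H x =>
  set r : ℝ := x - round x with hr
  have hxr : ((x : ℝ) : Circ) = ((r : ℝ) : Circ) := by
    have : ((x - r : ℝ) : Circ) = 0 := by
      rw [AddCircle.coe_eq_zero_iff]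
      exact ⟨round x, by simp [hr]⟩
    have := (QuotientAddGroup.mk_sub _ x r).symm.trans this
    rwa [sub_eq_zero] at this
  have hsm : ∀ n : ℤ, (n : ℤ) • ((r : ℝ) : Circ) = (((n : ℝ) * r : ℝ) : Circ) := by
    intro n
    rw [← QuotientAddGroup.mk_zsmul]
    norm_num
  have h' : ∀ n : ℤ, ‖(((n : ℝ) * r : ℝ) : Circ)‖ < 1/4 := by
    intro n
    rw [← hsm n, ← hxr]
    exact h n
  rw [hxr]
  by_contra hne
  have hrne : r ≠ 0 := by
    intro h0
    apply hne
    rw [h0]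
    simp
  have habs : |r| ≤ 1/2 := abs_sub_round x
  have hd : 0 < |r| := abs_pos.mpr hrne
  have h1 : |r| < 1/4 := by
    have := h' 1
    rw [(AddCircle.norm_coe_eq_abs_iff (p := (1:ℝ)) one_ne_zero).mpr
      (by simpa using habs)] at this
    simpa using this
  -- choose n = ⌈1/(4|r|)⌉
  set n : ℤ := ⌈1/(4*|r|)⌉ with hn
  have hnpos : (0:ℝ) < 1/(4*|r|) := by positivity
  have hn1 : (1/(4*|r|) : ℝ) ≤ (n : ℝ) := Int.le_ceil _
  have hn2 : (n : ℝ) < 1/(4*|r|) + 1 := Int.ceil_lt_add_one _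
  have hnpos' : (0:ℝ) < (n:ℝ) := lt_of_lt_of_le hnpos hn1
  have hlow : (1/4 : ℝ) ≤ (n:ℝ) * |r| := by
    rw [div_le_iff₀ (by positivity)] at hn1
    nlinarith
  have hhigh : (n:ℝ) * |r| < 1/2 := by
    have h2 : (n:ℝ) * |r| < (1/(4*|r|) + 1) * |r| := mul_lt_mul_of_pos_right hn2 hd
    have heq : (1/(4*|r|) + 1) * |r| = 1/4 + |r| := by
      field_simp
    rw [heq] at h2
    linarith
  have := h' n
  have habs' : |(n:ℝ) * r| = (n:ℝ) * |r| := by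
    rw [abs_mul, abs_of_pos hnpos']
  rw [(AddCircle.norm_coe_eq_abs_iff (p := (1:ℝ)) one_ne_zero).mpr
    (by rw [habs']; simpa using hhigh.le)] at this
  rw [habs'] at this
  linarith

/-- The homomorphism , , is continuous if and only if there is a
finite subset  such that every  annihilating all the 
satisfies . -/
theorem stmt4 (I : Type*) (t : I → Circ) :
    (Continuous fun g : I →₀ ℤ => pairT g t) ↔
      ∃ (m : ℕ) (x : Fin m → (I → ℤ)), ∀ g : I →₀ ℤ,
        (∀ j : Fin m, pairZ g (x j) = 0) → pairT g t = 0 := by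
  constructor
  · intro hc
    -- continuity at 0
    have h0 : pairT (0 : I →₀ ℤ) t = 0 := by simp [pairT_eq]
    have hU : IsOpen {s : Circ | ‖s‖ < 1/4} :=
      isOpen_lt (continuous_norm) continuous_const
    have hmem : (fun g : I →₀ ℤ => pairT g t) 0 ∈ {s : Circ | ‖s‖ < 1/4} := by
      show pairT (0 : I →₀ ℤ) t ∈ _
      rw [h0]
      simp only [Set.mem_setOf_eq, norm_zero]
      norm_num
    have hnb : {g : I →₀ ℤ | ‖pairT g t‖ < 1/4} ∈ nhds (0 : I →₀ ℤ) := by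
      have := hc.continuousAt (x := (0 : I →₀ ℤ)) (hU.mem_nhds hmem)
      simpa using this
    rw [nhds_induced, Filter.mem_comap] at hnb
    obtain ⟨W, hW, hWsub⟩ := hnb
    rw [nhds_pi, Filter.mem_pi] at hW
    obtain ⟨S, hSfin, V, hV, hVsub⟩ := hW
    obtain ⟨m, e, he⟩ := hSfin.fin_embedding
    refine ⟨m, fun j => e j, fun g hg => ?_⟩
    have hgS : ∀ x ∈ S, pairZ g x = 0 := by
      intro x hx
      rw [← he] at hx
      obtain ⟨j, rfl⟩ := hx
      exact hg j
    apply eq_zero_of_forall_norm_zsmul_lt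
    intro n
    have hmemW : (fun x : I → ℤ => pairZ (n • g) x) ∈ Set.pi S V := by
      intro x hx
      show pairZ (n • g) x ∈ V x
      have hz : pairZ (n • g) x = n * pairZ g x := by
        simp [pairZ_eq, map_zsmul, smul_eq_mul]
      rw [hz, hgS x hx, mul_zero]
      have hVx := hV x
      rw [nhds_discrete, Filter.mem_pure] at hVx
      have h0x : pairZ (0 : I →₀ ℤ) x = 0 := by simp [pairZ_eq]
      rwa [h0x] at hVx
    have hin : n • g ∈ {g : I →₀ ℤ | ‖pairT g t‖ < 1/4} := hWsub (hVsub hmemW)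
    have h2 : ‖pairT (n • g) t‖ < 1/4 := hin
    have hsm : pairT (n • g) t = n • pairT g t := by
      simp [pairT_eq, map_zsmul]
    rwa [hsm] at h2
  · rintro ⟨m, x, hx⟩
    classical
    set φ : (I →₀ ℤ) → (Fin m → ℤ) := fun g j => pairZ g (x j) with hφ
    have hφc : Continuous φ := by
      apply continuous_pi
      intro j
      have hdom : Continuous (fun g : I →₀ ℤ => fun y : I → ℤ => pairZ g y) :=
        continuous_induced_dom
      exact (continuous_apply (x j)).comp hdom
    set ψ : (Fin m → ℤ) → Circ := fun v =>
      if h : ∃ g : I →₀ ℤ, φ g = v then pairT h.choose t else 0 with hψ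
    have hψc : Continuous ψ := continuous_of_discreteTopology
    have hcomp : (fun g : I →₀ ℤ => pairT g t) = ψ ∘ φ := by
      funext g
      have hex : ∃ g' : I →₀ ℤ, φ g' = φ g := ⟨g, rfl⟩
      simp only [hψ, Function.comp_apply, dif_pos hex]
      have hch : φ hex.choose = φ g := hex.choose_spec
      have hker : ∀ j, pairZ (g - hex.choose) (x j) = 0 := by
        intro j
        have hsub : pairZ (g - hex.choose) (x j)
            = pairZ g (x j) - pairZ hex.choose (x j) := by
          simp [pairZ_eq, map_sub]
        rw [hsub]
        have hcj := congrFun hch j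
        simp only [hφ] at hcj
        rw [hcj, sub_self]
      have hz := hx _ hker
      have hsub : pairT (g - hex.choose) t = pairT g t - pairT hex.choose t := by
        simp [pairT_eq, map_sub]
      rw [hsub] at hz
      exact sub_eq_zero.mp hz
    rw [hcomp]
    exact hψc.comp hφc
end

section
/- Let J be an infinite subset of I. Then for every finite subset F ⊆ ℤ^I there exists g ∈ H with g ≠ 0, g(i) = 0 for all i ∉ J, and ⟨g,x⟩ = 0 for all x ∈ F. Equivalently, setting H_J = {g ∈ H : g(i) = 0 for all i ∉ J}, every open subgroup of H of the form {g ∈ H : ⟨g,x⟩ = 0 for all x ∈ F} with F ⊆ ℤ^I finite meets H_J in a nontrivial subgroup. -/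
/-- If  is infinite then, for every finite , there is a nonzero 
supported in  with  for all ; i.e. every basic open subgroup of 
meets  nontrivially. -/
theorem stmt6 (I : Type*) (J : Set I) (hJ : J.Infinite) (F : Finset (I → ℤ)) :
    ∃ g : I →₀ ℤ, g ≠ 0 ∧ (∀ i ∉ J, g i = 0) ∧ ∀ x ∈ F, pairZ g x = 0 := by
  obtain ⟨S, hSJ, hScard⟩ := hJ.exists_subset_card_eq (F.card + 1)
  -- the linear map (S → ℤ) → (F → ℤ)
  classical
  let φ : ({i // i ∈ S} → ℤ) →ₗ[ℤ] ({x // x ∈ F} → ℤ) :=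
    LinearMap.pi fun x => ∑ i : {i // i ∈ S}, (x.1 i.1) • LinearMap.proj i
  have hninj : ¬ Function.Injective φ := by
    intro hinj
    have h1 := LinearMap.finrank_le_finrank_of_injective hinj
    rw [Module.finrank_pi, Module.finrank_pi] at h1
    simp only [Fintype.card_coe, hScard] at h1
    omega
  have : ∃ v, φ v = 0 ∧ v ≠ 0 := by
    by_contra h
    push_neg at h
    exact hninj ((injective_iff_map_eq_zero φ).mpr h)
  obtain ⟨v, hv0, hvne⟩ := this
  refine ⟨Finsupp.onFinset S (fun i => if h : i ∈ S then v ⟨i, h⟩ else 0)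
      (fun i hi => by by_contra h; simp [h] at hi), ?_, ?_, ?_⟩
  · intro hg
    obtain ⟨i, hi⟩ := Function.ne_iff.mp hvne
    have : (0 : I →₀ ℤ) i.1 = v i := by
      rw [← hg]; simp [Finsupp.onFinset, i.2]
    simp at this
    exact hi this.symm
  · intro i hiJ
    have : i ∉ S := fun h => hiJ (hSJ h)
    simp [this]
  · intro x hx
    have hsupp : (Finsupp.onFinset S (fun i => if h : i ∈ S then v ⟨i, h⟩ else 0)
        (fun i hi => by by_contra h; simp [h] at hi)).support ⊆ S :=
      Finsupp.support_onFinset_subset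
    rw [pairZ, Finsupp.sum_of_support_subset _ hsupp (fun i n => n * x i) (fun i _ => zero_mul _)]
    have := congrFun hv0 ⟨x, hx⟩
    simp only [φ, LinearMap.pi_apply, LinearMap.sum_apply, LinearMap.smul_apply,
      LinearMap.proj_apply, Pi.zero_apply] at this
    refine Eq.trans ?_ this
    rw [← Finset.sum_coe_sort S]
    refine Finset.sum_congr rfl fun i _ => ?_
    simp [Finsupp.onFinset, i.2, mul_comm]
end

section
/- Let J ⊆ I and let t ∈ 𝕋^I be such that the homomorphism χ_t : H → 𝕋 is continuous. Define s ∈ 𝕋^I by s(i) = t(i) for i ∈ J and s(i) = 0 for i ∉ J. Then χ_s : H → 𝕋 is also continuous. -/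
lemma pairT_filter {I : Type*} (J : Set I) [DecidablePred (· ∈ J)] (g : I →₀ ℤ) (t : I → Circ) :
    pairT (g.filter (· ∈ J)) t = pairT g (J.indicator t) := by
  unfold pairT
  rw [Finsupp.sum, Finsupp.sum, Finsupp.support_filter, Finset.sum_filter]
  apply Finset.sum_congr rfl
  intro i _
  rw [Finsupp.filter_apply, Set.indicator_apply]
  split <;> simp

lemma pairZ_filter {I : Type*} (J : Set I) [DecidablePred (· ∈ J)] (g : I →₀ ℤ) (x : I → ℤ) :
    pairZ (g.filter (· ∈ J)) x = pairZ g (fun i => if i ∈ J then x i else 0) := by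
  unfold pairZ
  rw [Finsupp.sum, Finsupp.sum, Finsupp.support_filter, Finset.sum_filter]
  apply Finset.sum_congr rfl
  intro i _
  rw [Finsupp.filter_apply]
  split <;> rename_i h <;> simp [h]

lemma continuous_filter {I : Type*} (J : Set I) [DecidablePred (· ∈ J)] :
    Continuous (fun g : I →₀ ℤ => g.filter (· ∈ J)) := by
  apply continuous_induced_rng.2
  apply continuous_pi
  intro x
  have : (fun g : I →₀ ℤ => pairZ (g.filter (· ∈ J)) x)
      = fun g : I →₀ ℤ => pairZ g (fun i => if i ∈ J then x i else 0) := by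
    funext g; exact pairZ_filter J g x
  show Continuous fun g : I →₀ ℤ => pairZ (g.filter (· ∈ J)) x
  rw [this]
  exact (continuous_apply (fun i => if i ∈ J then x i else 0)).comp
    (continuous_induced_dom : Continuous (fun g : I →₀ ℤ => fun y : I → ℤ => pairZ g y))

/-- If  is continuous and  agrees with  on  and vanishes off ,
then  is continuous as well. -/
theorem stmt8 (I : Type*) (J : Set I) (t : I → Circ)
    (ht : Continuous fun g : I →₀ ℤ => pairT g t) :
    Continuous fun g : I →₀ ℤ => pairT g (J.indicator t) := by
  classical
  have : (fun g : I →₀ ℤ => pairT g (J.indicator t))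
      = (fun g : I →₀ ℤ => pairT g t) ∘ fun g => g.filter (· ∈ J) := by
    funext g; exact (pairT_filter J g t).symm
  rw [this]
  exact ht.comp (continuous_filter J)
end

section
/- Let t ∈ 𝕋^I. Suppose there exist an infinite subset J ⊆ I and real numbers (r_i)_{i∈J} with t(i) = r_i + ℤ for each i ∈ J, such that each r_i is irrational and the family {r_i : i ∈ J} ∪ {1} is linearly independent over the field ℚ of rational numbers. Then the homomorphism χ_t : H → 𝕋 is not continuous. -/
/-- For irrational `α`, the multiples of `α` are dense in the circle. -/
lemma dense_zmul_circ (α : ℝ) (hα : Irrational α) :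
    Dense ((AddSubgroup.zmultiples ((α : Circ))) : Set Circ) := by
  set S : AddSubgroup ℝ := AddSubgroup.closure {α, 1} with hS
  have hdense : Dense (S : Set ℝ) := by
    rcases S.dense_or_cyclic with h | ⟨a, ha⟩
    · exact h
    · exfalso
      have hαS : α ∈ S := AddSubgroup.subset_closure (by simp)
      have h1S : (1:ℝ) ∈ S := AddSubgroup.subset_closure (by simp)
      rw [ha, AddSubgroup.mem_closure_singleton] at hαS h1S
      obtain ⟨m, hm⟩ := hαS
      obtain ⟨k, hk⟩ := h1S
      have hk0 : (k : ℝ) * a = 1 := by rw [← hk]; simp [zsmul_eq_mul]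
      have hkne : (k:ℝ) ≠ 0 := by
        intro h; rw [h, zero_mul] at hk0; exact one_ne_zero hk0.symm
      refine hα ⟨(m : ℚ) / (k : ℚ), ?_⟩
      have ha' : a = 1 / (k:ℝ) := by field_simp at hk0 ⊢; linarith [hk0]
      rw [← hm, zsmul_eq_mul, ha']
      push_cast
      field_simp
  have hsurj : DenseRange ((↑) : ℝ → Circ) :=
    Function.Surjective.denseRange (fun x => QuotientAddGroup.mk_surjective x)
  have hmaps : Set.MapsTo ((↑) : ℝ → Circ) (S : Set ℝ)
      ((AddSubgroup.zmultiples ((α : Circ))) : Set Circ) := by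
    intro x hx
    have hle : S ≤ AddSubgroup.comap (QuotientAddGroup.mk' (AddSubgroup.zmultiples (1:ℝ)))
        (AddSubgroup.zmultiples ((α : Circ))) := by
      rw [hS, AddSubgroup.closure_le]
      rintro y hy
      simp only [Set.mem_insert_iff, Set.mem_singleton_iff] at hy
      rcases hy with rfl | rfl
      · exact AddSubgroup.mem_comap.2 (AddSubgroup.mem_zmultiples _)
      · refine AddSubgroup.mem_comap.2 ?_
        have h0 : ((QuotientAddGroup.mk' (AddSubgroup.zmultiples (1:ℝ))) (1:ℝ)) = (0 : Circ) :=
          AddCircle.coe_period (1:ℝ)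
        rw [h0]; exact zero_mem _
    exact hle hx
  exact hsurj.dense_of_mapsTo continuous_quotient_mk' hdense hmaps

lemma exists_int_kernel {n : ℕ} {ι : Type*} [Fintype ι] (hcard : Fintype.card ι < n)
    (v : ι → (Fin n → ℤ)) : ∃ c : Fin n → ℤ, c ≠ 0 ∧ ∀ i, ∑ m, c m * v i m = 0 := by
  let L : (Fin n → ℤ) →ₗ[ℤ] (ι → ℤ) :=
    { toFun := fun c i => ∑ m, c m * v i m
      map_add' := by intro a b; funext i; simp [add_mul, Finset.sum_add_distrib]
      map_smul' := by intro a b; funext i; simp [Finset.mul_sum, mul_assoc] }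
  by_contra h
  push_neg at h
  have hinj : Function.Injective L := by
    intro a b hab
    by_contra hne
    obtain ⟨i, hi⟩ := h (a - b) (sub_ne_zero.2 hne)
    apply hi
    have h0 : L (a - b) = 0 := by rw [map_sub, hab, sub_self]
    exact congrFun h0 i
  have hle := LinearMap.lift_rank_le_of_injective L hinj
  rw [rank_fun' (R := ℤ) (η := Fin n), rank_fun' (R := ℤ) (η := ι), Fintype.card_fin] at hle
  simp only [Cardinal.lift_natCast, Nat.cast_le] at hle
  exact absurd hle (not_le.mpr hcard)

/-- If  takes, on an infinite set , values  with all 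
irrational and  linearly independent over , then  is
not continuous. -/
theorem stmt9 (I : Type*) (t : I → Circ) (J : Set I) (hJ : J.Infinite) (r : J → ℝ)
    (htr : ∀ i : J, t i = (r i : Circ))
    (hirr : ∀ i : J, Irrational (r i))
    (hli : LinearIndependent ℚ (fun o : Option J => o.elim (1 : ℝ) r)) :
    ¬ Continuous fun g : I →₀ ℤ => pairT g t := by
  intro hc
  -- a nonzero point of the circle
  set p : Circ := ((1/2 : ℝ) : Circ) with hp
  have hpne : p ≠ 0 := by
    rw [hp, Ne, AddCircle.coe_eq_zero_iff]
    rintro ⟨n, hn⟩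
    rw [zsmul_eq_mul, mul_one] at hn
    have : (2:ℝ) * n = 1 := by rw [hn]; ring
    have h2 : (2 * n : ℤ) = (1 : ℤ) := by exact_mod_cast (by push_cast; linarith [this] : ((2*n : ℤ):ℝ) = 1)
    omega
  -- a closed neighborhood of 0 avoiding p
  obtain ⟨U, hU0, hUc, hUsub⟩ :=
    exists_mem_nhds_isClosed_subset (isOpen_compl_singleton.mem_nhds
      (by simpa using hpne.symm : (0 : Circ) ∈ ({p}ᶜ : Set Circ)))
  -- continuity gives a neighborhood condition
  have h1 : (fun g : I →₀ ℤ => pairT g t) ⁻¹' U ∈ nhds (0 : I →₀ ℤ) := by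
    apply hc.continuousAt.preimage_mem_nhds
    have : pairT (0 : I →₀ ℤ) t = 0 := by simp [pairT]
    rwa [this]
  have h2 : (fun g : I →₀ ℤ => pairT g t) ⁻¹' U ∈
      Filter.comap (fun g (x : I → ℤ) => pairZ g x)
        (nhds (fun x => pairZ (0 : I →₀ ℤ) x)) := by
    rw [← nhds_induced]; exact h1
  obtain ⟨S, hS, hSsub⟩ := Filter.mem_comap.1 h2
  have hz : (fun x : I → ℤ => pairZ (0 : I →₀ ℤ) x) = fun _ => (0:ℤ) := by
    funext x; simp [pairZ]
  rw [hz, nhds_pi] at hS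
  obtain ⟨D, hDfin, s, hs, hsub⟩ := Filter.mem_pi.1 hS
  -- the key set H0
  have hH0 : ∀ g : I →₀ ℤ, (∀ x ∈ D, pairZ g x = 0) → pairT g t ∈ U := by
    intro g hg
    apply hSsub
    apply hsub
    intro x hx
    show pairZ g x ∈ s x
    rw [hg x hx]
    have := hs x
    rw [nhds_discrete] at this
    exact this
  -- choose n+1 points of J
  set F : Finset (I → ℤ) := hDfin.toFinset with hF
  set n : ℕ := F.card with hn
  set e : ℕ ↪ ↥J := hJ.natEmbedding J with he
  set eJ : Fin (n+1) → ↥J := fun m => e m with heJ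
  have heJinj : Function.Injective eJ := fun a b hab => by
    have := e.injective hab; exact Fin.ext (by exact_mod_cast this)
  set eI : Fin (n+1) → I := fun m => (eJ m : I) with heI
  have heIinj : Function.Injective eI := fun a b hab => heJinj (Subtype.ext hab)
  -- find a nonzero integer kernel vector
  obtain ⟨c, hc0, hck⟩ := exists_int_kernel (n := n+1) (ι := ↥F)
    (by simp [Fintype.card_coe]; exact le_of_eq hn.symm) (fun x m => (x : I → ℤ) (eI m))
  -- the element g
  set g : I →₀ ℤ := ∑ m, Finsupp.single (eI m) (c m) with hg
  -- pairings with g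
  have hpairZ : ∀ x : I → ℤ, pairZ g x = ∑ m, c m * x (eI m) := by
    intro x
    rw [pairZ_eq, hg, map_sum]
    congr 1; funext m
    rw [Finsupp.linearCombination_single, smul_eq_mul]
  have hgD : ∀ k : ℤ, ∀ x ∈ D, pairZ (k • g) x = 0 := by
    intro k x hx
    rw [pairZ_eq, map_smul, ← pairZ_eq, hpairZ, hck ⟨x, hDfin.mem_toFinset.2 hx⟩]
    simp
  -- value of chi on g
  set α : ℝ := ∑ m, (c m : ℝ) * r (eJ m) with hα
  have hval : pairT g t = (α : Circ) := by
    rw [pairT_eq, hg, map_sum, hα]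
    have : ((∑ m, (c m : ℝ) * r (eJ m) : ℝ) : Circ)
        = ∑ m, (((c m : ℝ) * r (eJ m) : ℝ) : Circ) := by
      exact map_sum (QuotientAddGroup.mk' (AddSubgroup.zmultiples (1:ℝ))) _ _
    rw [this]
    congr 1; funext m
    rw [Finsupp.linearCombination_single]
    show (c m) • t (eI m) = _
    rw [heI, htr (eJ m)]
    rw [← QuotientAddGroup.mk_zsmul, zsmul_eq_mul]
  -- α is irrational
  have hαirr : Irrational α := by
    rintro ⟨q, hq⟩
    apply hc0
    -- use linear independence
    have hcomp : LinearIndependent ℚ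
        (fun o : Option (Fin (n+1)) => (Option.map eJ o).elim (1:ℝ) r) := by
      exact hli.comp (Option.map eJ) (Option.map_injective heJinj)
    rw [Fintype.linearIndependent_iff] at hcomp
    have key := hcomp (fun o => o.elim (-q) (fun m => (c m : ℚ))) ?_
    · funext m
      have := key (some m)
      simpa using this
    · rw [Fintype.sum_option]
      simp only [Option.elim, Option.map]
      have hsum : ∑ m : Fin (n+1), (c m : ℚ) • r (eJ m) = α := by
        rw [hα]
        refine Finset.sum_congr rfl fun m _ => ?_
        rw [Rat.smul_def]
        push_cast
        ring
      rw [hsum, ← hq, Rat.smul_def]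
      push_cast
      ring
  -- density contradiction
  have hdense := dense_zmul_circ α hαirr
  have hsubU : ((AddSubgroup.zmultiples ((α : Circ))) : Set Circ) ⊆ U := by
    rintro y hy
    obtain ⟨k, hk⟩ := AddSubgroup.mem_zmultiples_iff.1 hy
    have := hH0 (k • g) (hgD k)
    rw [pairT_eq, map_smul, ← pairT_eq, hval] at this
    rwa [← hk]
  have : (Set.univ : Set Circ) ⊆ U := by
    calc (Set.univ : Set Circ) = closure ((AddSubgroup.zmultiples ((α : Circ))) : Set Circ) :=
          (hdense.closure_eq).symm
      _ ⊆ closure U := closure_mono hsubU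
      _ = U := hUc.closure_eq
  exact hUsub (this (Set.mem_univ p)) rfl
end

section
/- Let t ∈ 𝕋^I be such that t(i) = (p_i/q_i)·t_0 + ℤ for every i ∈ I, where p_i, q_i are relatively prime integers with q_i ≠ 0 and t_0 is a real number that is either irrational or equal to 1. Then the homomorphism χ_t : H → 𝕋 is continuous if and only if the family (|q_i|)_{i∈I} is bounded. -/
/-! ### Auxiliary material -/

/-- The quotient map `ℝ → 𝕋` as an additive homomorphism. -/
noncomputable def mkC : ℝ →+ Circ := QuotientAddGroup.mk' _

lemma mkC_apply (x : ℝ) : mkC x = (x : Circ) := rfl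

lemma pairZ_zsmul {I : Type*} (n : ℤ) (g : I →₀ ℤ) (x : I → ℤ) :
    pairZ (n • g) x = n * pairZ g x := by
  simp [pairZ_eq, map_smul, smul_eq_mul]

lemma pairT_zsmul {I : Type*} (n : ℤ) (g : I →₀ ℤ) (t : I → Circ) :
    pairT (n • g) t = n • pairT g t := by
  simp [pairT_eq, map_smul]

/-- If all integer multiples of a real number are within `1/4` of an integer,
then the number is an integer. -/
lemma real_small (a : ℝ) (h : ∀ n : ℤ, ∃ m : ℤ, |n * a - m| < 4⁻¹) : ∃ m : ℤ, a = (m : ℝ) := by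
  obtain ⟨m₁, hm₁⟩ := h 1
  set c : ℝ := a - m₁ with hcdef
  suffices hc0 : c = 0 by exact ⟨m₁, by rw [← sub_eq_zero]; simpa using hc0⟩
  by_contra hne
  have hcb : |c| < 4⁻¹ := by simpa [hcdef] using hm₁
  have hu : 0 < |c| := abs_pos.mpr hne
  have h2 : ∀ n : ℕ, ∃ m : ℤ, |(n : ℝ) * |c| - m| < 4⁻¹ := by
    intro n
    rcases abs_cases c with ⟨he, _⟩ | ⟨he, _⟩
    · obtain ⟨m, hm⟩ := h n
      refine ⟨m - n * m₁, ?_⟩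
      have : (n : ℝ) * |c| - (m - n * m₁ : ℤ) = n * a - m := by
        rw [he]; push_cast [hcdef]; ring
      rw [this]; exact hm
    · obtain ⟨m, hm⟩ := h (-n)
      refine ⟨m + n * m₁, ?_⟩
      have : (n : ℝ) * |c| - (m + n * m₁ : ℤ) = (-n : ℤ) * a - m := by
        rw [he]; push_cast [hcdef]; ring
      rw [this]; exact hm
  classical
  have hex : ∃ k : ℕ, (4⁻¹ : ℝ) < 2 ^ k * |c| := by
    obtain ⟨k, hk⟩ := pow_unbounded_of_one_lt ((4⁻¹ : ℝ) / |c|) (by norm_num : (1:ℝ) < 2)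
    exact ⟨k, by rwa [div_lt_iff₀ hu] at hk⟩
  let k := Nat.find hex
  have hk : (4⁻¹ : ℝ) < 2 ^ k * |c| := Nat.find_spec hex
  have hkne : k ≠ 0 := by
    intro h0
    rw [h0] at hk; simp at hk; linarith
  have hk1 : ¬ ((4⁻¹ : ℝ) < 2 ^ (k - 1) * |c|) := Nat.find_min hex (Nat.pred_lt hkne)
  push_neg at hk1
  have hhalf : 2 ^ k * |c| ≤ 2⁻¹ := by
    have : (2 : ℝ) ^ k = 2 * 2 ^ (k - 1) := by
      rw [← pow_succ']
      congr 1
      omega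
    rw [this]; nlinarith
  obtain ⟨m, hm⟩ := h2 (2 ^ k)
  have hcast : ((2 ^ k : ℕ) : ℝ) = 2 ^ k := by push_cast; ring
  rw [hcast] at hm
  rcases le_or_gt m 0 with hm0 | hm0
  · have : (m : ℝ) ≤ 0 := by exact_mod_cast hm0
    have : 4⁻¹ < 2 ^ k * |c| - m := by linarith
    rw [abs_sub_lt_iff] at hm; linarith
  · have : (1 : ℝ) ≤ m := by exact_mod_cast hm0
    rw [abs_sub_lt_iff] at hm; linarith

/-- An element of the circle all of whose multiples lie in the image of `(-1/4, 1/4)` is zero. -/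
lemma circ_small (s : Circ)
    (h : ∀ n : ℤ, ∃ r ∈ Set.Ioo (-(4⁻¹ : ℝ)) 4⁻¹, (r : Circ) = n • s) : s = 0 := by
  obtain ⟨a, ha⟩ := QuotientAddGroup.mk_surjective s
  have key : ∀ n : ℤ, ∃ m : ℤ, |n * a - m| < 4⁻¹ := by
    intro n
    obtain ⟨r, hr, hrs⟩ := h n
    have hns : (n : ℤ) • s = ((n • a : ℝ) : Circ) := by
      rw [← ha, ← mkC_apply, ← mkC_apply, ← map_zsmul]
    rw [hns] at hrs
    have : ((n • a - r : ℝ) : Circ) = 0 := by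
      rw [← mkC_apply, map_sub, mkC_apply, mkC_apply, hrs, sub_self]
    obtain ⟨m, hm⟩ := (AddCircle.coe_eq_zero_iff _).mp this
    refine ⟨m, ?_⟩
    have : (m : ℝ) = n * a - r := by simpa [zsmul_eq_mul] using hm
    rw [show (n:ℝ) * a - m = r by rw [this]; ring]
    rw [Set.mem_Ioo] at hr
    rw [abs_lt]; exact ⟨by linarith [hr.1], hr.2⟩
  obtain ⟨m, hm⟩ := real_small a key
  rw [← ha, hm]
  rw [show ((m:ℝ) : Circ) = 0 from (AddCircle.coe_eq_zero_iff _).mpr ⟨m, by simp⟩]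

/-- Let  with  coprime integers, , and 
irrational or equal to . Then  is continuous iff  is bounded. -/
theorem stmt10 (I : Type*) (t : I → Circ) (p q : I → ℤ)
    (hq : ∀ i, q i ≠ 0) (hcop : ∀ i, IsCoprime (p i) (q i))
    (t₀ : ℝ) (ht₀ : Irrational t₀ ∨ t₀ = 1)
    (ht : ∀ i, t i = ((((p i : ℝ) / (q i : ℝ)) * t₀ : ℝ) : Circ)) :
    (Continuous fun g : I →₀ ℤ => pairT g t) ↔ ∃ C : ℕ, ∀ i, (q i).natAbs ≤ C := by
  classical
  have ht₀ne : t₀ ≠ 0 := by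
    rcases ht₀ with h | h
    · exact h.ne_zero
    · rw [h]; norm_num
  constructor
  · -- Continuity implies boundedness of the denominators.
    intro hcont
    -- Step 1: extract a finite set of "coordinates" on which the kernel condition forces
    -- the character to vanish.
    have step1 : ∃ F : Finset (I → ℤ),
        ∀ g : I →₀ ℤ, (∀ x ∈ F, pairZ g x = 0) → pairT g t = 0 := by
      set U : Set Circ := (fun r : ℝ => (r : Circ)) '' Set.Ioo (-(4⁻¹ : ℝ)) 4⁻¹ with hUdef
      have hUopen : IsOpen U := QuotientAddGroup.isOpenMap_coe _ isOpen_Ioo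
      have hU0 : (0 : Circ) ∈ U := ⟨0, by constructor <;> norm_num, rfl⟩
      have hpre : IsOpen ((fun g : I →₀ ℤ => pairT g t) ⁻¹' U) := hcont.isOpen_preimage U hUopen
      obtain ⟨V, hVopen, hVeq⟩ := isOpen_induced_iff.mp hpre
      have hΦ0 : (fun x : I → ℤ => pairZ (0 : I →₀ ℤ) x) = 0 := by
        funext x; simp [pairZ]
      have h0V : (0 : (I → ℤ) → ℤ) ∈ V := by
        have h0U : (0 : I →₀ ℤ) ∈ (fun g : I →₀ ℤ => pairT g t) ⁻¹' U := by
          simp only [Set.mem_preimage]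
          have : pairT (0 : I →₀ ℤ) t = 0 := by simp [pairT]
          rw [this]; exact hU0
        rw [← hVeq] at h0U
        have h := h0U; simp [hΦ0] at h; exact h
      obtain ⟨F, u, hu, hsub⟩ := isOpen_pi_iff.mp hVopen _ h0V
      refine ⟨F, fun g hg => ?_⟩
      apply circ_small
      intro n
      have h1 : ∀ x ∈ F, pairZ (n • g) x = 0 := fun x hx => by
        rw [pairZ_zsmul, hg x hx, mul_zero]
      have h2 : (fun x : I → ℤ => pairZ (n • g) x) ∈ (F : Set (I → ℤ)).pi u := by
        intro x hx
        have := (hu x hx).2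
        simp only [Pi.zero_apply] at this
        simpa [h1 x hx] using this
      have h3 : n • g ∈ (fun g : I →₀ ℤ => pairT g t) ⁻¹' U := by
        rw [← hVeq]; exact hsub h2
      obtain ⟨r, hr, hrs⟩ := h3
      exact ⟨r, hr, by simp only at hrs; rw [hrs, pairT_zsmul]⟩
    obtain ⟨F, hvan⟩ := step1
    -- Step 2: all the reals `(p i / q i) * t₀` lie in a finitely generated
    -- `ℤ`-submodule of `ℝ`.
    set φ : (I →₀ ℤ) →ₗ[ℤ] (↥F → ℤ) :=
      LinearMap.pi (fun x : ↥F => Finsupp.linearCombination ℤ (x : I → ℤ)) with hφdef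
    have hφ : ∀ (g : I →₀ ℤ) (x : ↥F), φ g x = pairZ g (x : I → ℤ) := by
      intro g x; rw [pairZ_eq]; rfl
    have hFG : (LinearMap.range φ).FG := IsNoetherian.noetherian _
    obtain ⟨S, hS⟩ := hFG
    set gs : (↥F → ℤ) → (I →₀ ℤ) :=
      fun s => if h : s ∈ LinearMap.range φ then h.choose else 0 with hgsdef
    have hgs : ∀ s ∈ LinearMap.range φ, φ (gs s) = s := by
      intro s h
      simp only [hgsdef, dif_pos h]
      exact h.choose_spec
    set r : (↥F → ℤ) → ℝ :=
      fun s => (QuotientAddGroup.mk_surjective (pairT (gs s) t)).choose with hrdef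
    have hr : ∀ s, ((r s : ℝ) : Circ) = pairT (gs s) t :=
      fun s => (QuotientAddGroup.mk_surjective (pairT (gs s) t)).choose_spec
    set B : Submodule ℤ ℝ := Submodule.span ℤ (insert (1 : ℝ) (r '' ↑S)) with hBdef
    have hBFG : B.FG := Submodule.fg_def.mpr
      ⟨_, ((S.finite_toSet.image r).insert 1), rfl⟩
    have hSsub : (S : Set (↥F → ℤ)) ⊆ LinearMap.range φ := by
      rw [← hS]; exact Submodule.subset_span
    have key : ∀ i, ((p i : ℝ) / (q i : ℝ) * t₀) ∈ B := by
      intro i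
      have hδ : φ (Finsupp.single i 1) ∈ Submodule.span ℤ (S : Set (↥F → ℤ)) := by
        rw [hS]; exact LinearMap.mem_range_self φ _
      obtain ⟨c, -, hc⟩ := Submodule.mem_span_finset.mp hδ
      set g0 : I →₀ ℤ := Finsupp.single i 1 - ∑ s ∈ S, c s • gs s with hg0def
      have hφg0 : φ g0 = 0 := by
        rw [hg0def, map_sub, map_sum]
        have : ∑ s ∈ S, φ (c s • gs s) = ∑ s ∈ S, c s • s := by
          refine Finset.sum_congr rfl fun s hs => ?_
          rw [map_smul, hgs s (hSsub hs)]
        rw [this, hc, sub_self]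
      have hker : ∀ x ∈ F, pairZ g0 x = 0 := by
        intro x hx
        have := congrFun hφg0 ⟨x, hx⟩
        rw [hφ] at this
        simpa using this
      have h0 : pairT g0 t = 0 := hvan g0 hker
      have hsplit : pairT g0 t = t i - ∑ s ∈ S, c s • pairT (gs s) t := by
        rw [pairT_eq, hg0def, map_sub, map_sum]
        congr 1
        · simp [Finsupp.linearCombination_single]
        · exact Finset.sum_congr rfl fun s hs => by rw [map_smul, ← pairT_eq]
      have hti : t i = ∑ s ∈ S, c s • pairT (gs s) t := by
        rw [hsplit] at h0; rwa [sub_eq_zero] at h0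
      have hsum : t i = mkC (∑ s ∈ S, c s • r s) := by
        rw [hti, map_sum]
        refine Finset.sum_congr rfl fun s hs => ?_
        rw [map_zsmul, mkC_apply, hr]
      have hz : ((((p i : ℝ) / (q i : ℝ) * t₀) - ∑ s ∈ S, c s • r s : ℝ) : Circ) = 0 := by
        rw [← mkC_apply, map_sub, mkC_apply, ← ht i, ← hsum, sub_self]
      obtain ⟨m, hm⟩ := (AddCircle.coe_eq_zero_iff _).mp hz
      have heq : (p i : ℝ) / (q i : ℝ) * t₀ = m • (1 : ℝ) + ∑ s ∈ S, c s • r s := by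
        rw [hm]; ring
      rw [heq]
      refine B.add_mem (B.smul_mem m (Submodule.subset_span (Set.mem_insert _ _))) ?_
      exact Submodule.sum_mem _ fun s hs => B.smul_mem _
        (Submodule.subset_span (Set.mem_insert_of_mem _
          (Set.mem_image_of_mem r (Finset.mem_coe.mpr hs))))
    -- Step 3: deduce a common bound on the denominators.
    set L : ℚ →ₗ[ℤ] ℝ :=
      (AddMonoidHom.mk' (fun x : ℚ => (x : ℝ) * t₀) (by intro a b; push_cast; ring)).toIntLinearMap
      with hLdef
    have hL : ∀ x : ℚ, L x = (x : ℝ) * t₀ := fun x => rfl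
    have hLinj : Function.Injective L := by
      intro a b hab
      rw [hL, hL] at hab
      exact_mod_cast mul_right_cancel₀ ht₀ne hab
    set Λ : Submodule ℤ ℚ := B.comap L with hΛdef
    have hmem : ∀ i, ((p i : ℚ) / (q i : ℚ)) ∈ Λ := by
      intro i
      simp only [hΛdef, Submodule.mem_comap, hL]
      have : (((p i : ℚ) / (q i : ℚ) : ℚ) : ℝ) = (p i : ℝ) / (q i : ℝ) := by push_cast; ring
      rw [this]; exact key i
    haveI : IsNoetherian ℤ ↥B := isNoetherian_of_fg_of_noetherian B hBFG
    have hle : Submodule.map L Λ ≤ B := by rintro x ⟨y, hy, rfl⟩; exact hy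
    have hmapFG : (Submodule.map L Λ).FG := by
      have heq : Submodule.map B.subtype (Submodule.comap B.subtype (Submodule.map L Λ))
          = Submodule.map L Λ := by
        rw [Submodule.map_comap_subtype, inf_eq_right.mpr hle]
      rw [← heq]
      exact (IsNoetherian.noetherian _).map _
    have hΛFG : Λ.FG := Submodule.fg_of_fg_map_injective L hLinj hmapFG
    obtain ⟨T, hT⟩ := hΛFG
    set D : ℕ := ∏ x ∈ T, x.den with hDdef
    have hD0 : 0 < D := Finset.prod_pos fun x _ => x.pos
    have hDQ : (D : ℚ) ≠ 0 := Nat.cast_ne_zero.mpr hD0.ne'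
    have hsub1 : Λ ≤ Submodule.span ℤ {((D : ℚ))⁻¹} := by
      rw [← hT, Submodule.span_le]
      intro x hx
      have hdvdN : x.den ∣ D := Finset.dvd_prod_of_mem _ hx
      obtain ⟨e, he⟩ := hdvdN
      have hden : (x.den : ℚ) ≠ 0 := Nat.cast_ne_zero.mpr x.den_nz
      have hDq : ((D : ℚ)) = (x.den : ℚ) * (e : ℚ) := by exact_mod_cast congrArg Nat.cast he
      have he0 : (e : ℚ) ≠ 0 := fun h0 => hDQ (by rw [hDq, h0, mul_zero])
      apply Submodule.mem_span_singleton.mpr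
      refine ⟨x.num * e, ?_⟩
      have hkey : (↑x.num * ↑e : ℚ) * ((x.den : ℚ) * (e : ℚ))⁻¹ = (x.num : ℚ) / (x.den : ℚ) := by
        field_simp
      rw [zsmul_eq_mul]
      push_cast
      rw [hDq, hkey, Rat.num_div_den]
    refine ⟨D, fun i => ?_⟩
    have hx := hsub1 (hmem i)
    obtain ⟨a, ha⟩ := Submodule.mem_span_singleton.mp hx
    have hqQ : (q i : ℚ) ≠ 0 := Int.cast_ne_zero.mpr (hq i)
    rw [zsmul_eq_mul] at ha
    have hcast : (a : ℚ) * (q i : ℚ) = (D : ℚ) * (p i : ℚ) := by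
      field_simp at ha
      linarith [ha]
    have hZ : a * q i = (D : ℤ) * p i := by exact_mod_cast hcast
    have hdvd : q i ∣ (D : ℤ) * p i := ⟨a, by linarith [hZ]⟩
    have hqD : q i ∣ (D : ℤ) := (hcop i).symm.dvd_of_dvd_mul_right hdvd
    have : (q i).natAbs ∣ D := by
      have := Int.natAbs_dvd_natAbs.mpr hqD
      simpa using this
    exact Nat.le_of_dvd hD0 this
  · -- Boundedness of the denominators implies continuity.
    rintro ⟨C, hC⟩
    set N : ℤ := (C.factorial : ℤ) with hNdef
    have hNq : ∀ i, q i ∣ N := by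
      intro i
      have h1 : (q i).natAbs ∣ C.factorial :=
        Nat.dvd_factorial (Nat.pos_of_ne_zero (Int.natAbs_ne_zero.mpr (hq i))) (hC i)
      exact Int.natAbs_dvd.mp (Int.natCast_dvd_natCast.mpr h1)
    have hN0 : (N : ℝ) ≠ 0 := by
      simp only [hNdef]
      exact_mod_cast Nat.cast_ne_zero.mpr C.factorial_ne_zero
    set x : I → ℤ := fun i => (N / q i) * p i with hxdef
    have hxr : ∀ i, (x i : ℝ) = (N : ℝ) / (q i : ℝ) * (p i : ℝ) := by
      intro i
      have hqr : (q i : ℝ) ≠ 0 := Int.cast_ne_zero.mpr (hq i)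
      have h1 : ((N / q i : ℤ) : ℝ) * (q i : ℝ) = (N : ℝ) := by
        exact_mod_cast congrArg (fun z : ℤ => (z : ℝ)) (Int.ediv_mul_cancel (hNq i))
      have h2 : ((N / q i : ℤ) : ℝ) = (N : ℝ) / (q i : ℝ) := by
        field_simp at h1 ⊢
        linarith [h1]
      simp only [hxdef]
      push_cast
      rw [h2]
    set f : ℤ → Circ := fun m => (((m : ℝ) / (N : ℝ) * t₀ : ℝ) : Circ) with hfdef
    have hfact : (fun g : I →₀ ℤ => pairT g t) = f ∘ fun g => pairZ g x := by
      funext g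
      simp only [Function.comp_apply, hfdef]
      rw [← mkC_apply]
      have h1 : pairT g t = mkC (g.sum fun i n => (n : ℝ) * ((p i : ℝ) / (q i : ℝ) * t₀)) := by
        rw [map_finsuppSum]
        unfold pairT
        refine Finsupp.sum_congr fun i _ => ?_
        rw [ht i, ← mkC_apply, ← map_zsmul]
        congr 1
        rw [zsmul_eq_mul]
      rw [h1]
      congr 1
      have h2 : ((pairZ g x : ℤ) : ℝ) = g.sum fun i n => (n : ℝ) * (x i : ℝ) := by
        unfold pairZ
        simp only [Finsupp.sum]
        push_cast
        rfl
      rw [h2]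
      simp only [Finsupp.sum, Finset.sum_div, Finset.sum_mul]
      refine Finset.sum_congr rfl fun i _ => ?_
      rw [hxr i]
      have hqr : (q i : ℝ) ≠ 0 := Int.cast_ne_zero.mpr (hq i)
      field_simp
    rw [hfact]
    have hcont1 : Continuous fun g : I →₀ ℤ => pairZ g x := by
      have h1 : Continuous (fun g : I →₀ ℤ => fun y : I → ℤ => pairZ g y) :=
        continuous_induced_dom
      exact (continuous_apply x).comp h1
    exact (continuous_of_discreteTopology (f := f)).comp hcont1
end

section
/- Let X be a 0-dimensional space. For every continuous group homomorphism φ : C_p(X,ℤ) → ℤ (ℤ discrete) there is a unique finitely supported function n : X → ℤ such that φ(f) = ∑_{x∈X} n(x)·f(x) for all f ∈ C(X,ℤ), and the assignment φ ↦ n is a group isomorphism from the group of all continuous homomorphisms C_p(X,ℤ) → ℤ onto the group ℤ^(X) of finitely supported functions X → ℤ (equivalently, onto the free abelian group A(X) on X). -/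
open TopologicalSpace
open scoped Classical

/-- `C_p(X,ℤ)`: the group of continuous functions `X → ℤ` (with `ℤ` discrete) under
pointwise addition, equipped with the topology of pointwise convergence (the subspace
topology from the product `ℤ^X`). -/
def CpZ (X : Type*) [TopologicalSpace X] : Type _ := C(X, ℤ)

noncomputable instance (X : Type*) [TopologicalSpace X] : FunLike (CpZ X) X ℤ :=
  inferInstanceAs (FunLike C(X, ℤ) X ℤ)

noncomputable instance (X : Type*) [TopologicalSpace X] : AddCommGroup (CpZ X) :=
  inferInstanceAs (AddCommGroup C(X, ℤ))

noncomputable instance (X : Type*) [TopologicalSpace X] : TopologicalSpace (CpZ X) :=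
  TopologicalSpace.induced (fun f : CpZ X => (f : X → ℤ)) Pi.topologicalSpace

/-- The group of continuous homomorphisms `C_p(X,ℤ) → ℤ`, as a subgroup of the group of
all homomorphisms under pointwise addition. -/
noncomputable def contHomZGroup (X : Type*) [TopologicalSpace X] :
    AddSubgroup (CpZ X →+ ℤ) where
  carrier := {φ | Continuous φ}
  zero_mem' := continuous_const
  add_mem' := fun {a b} ha hb => Continuous.add ha hb
  neg_mem' := fun {a} ha => Continuous.neg ha

section Aux
variable {X : Type*} [TopologicalSpace X]

-- characteristic function of a clopen set
noncomputable def chi (U : Set X) (hU : IsClopen U) : CpZ X :=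
  ⟨fun y => if y ∈ U then 1 else 0, by
    apply continuous_discrete_rng.2
    intro b
    have : (fun y => if y ∈ U then (1:ℤ) else 0) ⁻¹' {b} =
        if b = 1 then U else if b = 0 then Uᶜ else ∅ := by
      ext y; by_cases hy : y ∈ U <;> simp [hy] <;> split_ifs <;> simp_all <;> omega
    rw [this]
    split_ifs
    · exact hU.isOpen
    · exact hU.compl.isOpen
    · exact isOpen_empty⟩

lemma chi_apply (U : Set X) (hU : IsClopen U) (y : X) :
    chi U hU y = if y ∈ U then 1 else 0 := rfl

/-- evaluation as an `AddMonoidHom` -/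
noncomputable def evAt (y : X) : CpZ X →+ ℤ where
  toFun := fun f => f y
  map_zero' := rfl
  map_add' := fun _ _ => rfl

lemma evAt_apply (y : X) (f : CpZ X) : evAt y f = f y := rfl

lemma eval_continuous (x : X) : Continuous (fun f : CpZ X => f x) :=
  (continuous_apply x).comp continuous_induced_dom

-- separation
lemma sep [T2Space X] (h0 : IsTopologicalBasis {s : Set X | IsClopen s})
    (x : X) (G : Finset X) (hx : x ∉ G) :
    ∃ U, IsClopen U ∧ x ∈ U ∧ ∀ y ∈ G, y ∉ U := by
  have key : ∀ y ∈ G, ∃ W : Set X, IsClopen W ∧ x ∈ W ∧ y ∉ W := by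
    intro y hy
    have hxy : x ≠ y := fun h => hx (h ▸ hy)
    obtain ⟨W, hW, hxW, hWsub⟩ := h0.exists_subset_of_mem_open
      (show x ∈ ({y}ᶜ : Set X) by simpa using hxy) (isOpen_compl_singleton)
    exact ⟨W, hW, hxW, fun hyW => (hWsub hyW) rfl⟩
  choose! W hW1 hW2 hW3 using key
  refine ⟨⋂ y ∈ G, W y, ?_, ?_, ?_⟩
  · exact Set.Finite.isClopen_biInter G.finite_toSet (fun y hy => hW1 y hy)
  · exact Set.mem_iInter₂.2 fun y hy => hW2 y hy
  · intro y hy hyU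
    exact hW3 y hy (Set.mem_iInter₂.1 hyU y hy)

-- continuity gives finite support control
lemma cont_finite (φ : CpZ X →+ ℤ) (hφ : Continuous φ) :
    ∃ F : Finset X, ∀ f : CpZ X, (∀ x ∈ F, f x = 0) → φ f = 0 := by
  have h0 : ({0} : Set ℤ) ∈ nhds (φ 0) := by
    rw [map_zero]; exact IsOpen.mem_nhds (isOpen_discrete _) rfl
  have h1 : φ ⁻¹' {0} ∈ nhds (0 : CpZ X) := hφ.continuousAt.preimage_mem_nhds h0
  rw [nhds_induced] at h1
  obtain ⟨t, ht, hts⟩ := h1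
  have : nhds ((fun f : CpZ X => (f : X → ℤ)) 0) = Filter.pi fun _ : X => pure (0:ℤ) := by
    rw [nhds_pi]
    simp [nhds_discrete]
    rfl
  rw [this, Filter.mem_pi] at ht
  obtain ⟨I, hIfin, s, hs, hIs⟩ := ht
  refine ⟨hIfin.toFinset, fun f hf => ?_⟩
  have : (f : X → ℤ) ∈ t := by
    apply hIs
    intro x hx
    have : f x = 0 := hf x (hIfin.mem_toFinset.2 hx)
    rw [this]
    exact hs x
  exact hts this

-- injectivity key lemma
lemma inj0 [T2Space X] (h0 : IsTopologicalBasis {s : Set X | IsClopen s})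
    (d : X →₀ ℤ) (h : ∀ f : CpZ X, (d.sum fun x c => c * f x) = 0) : d = 0 := by
  refine Finsupp.ext fun x => ?_
  simp only [Finsupp.coe_zero, Pi.zero_apply]
  by_contra hx
  have hxs : x ∈ d.support := Finsupp.mem_support_iff.2 hx
  obtain ⟨U, hU, hxU, hUy⟩ := sep h0 x (d.support.erase x) (Finset.notMem_erase x _)
  have := h (chi U hU)
  rw [Finsupp.sum] at this
  rw [Finset.sum_eq_single x (fun y hy hyx => by
    have hyU : y ∉ U := hUy y (Finset.mem_erase.2 ⟨hyx, hy⟩)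
    rw [chi_apply, if_neg hyU, mul_zero]) (fun hxs' => (hxs' hxs).elim)] at this
  rw [chi_apply, if_pos hxU, mul_one] at this
  exact hx this


-- existence
lemma exists_rep [T2Space X] (h0 : IsTopologicalBasis {s : Set X | IsClopen s})
    (φ : CpZ X →+ ℤ) (hφ : Continuous φ) :
    ∃ n : X →₀ ℤ, ∀ f : CpZ X, φ f = n.sum fun x c => c * f x := by
  obtain ⟨F, hF⟩ := cont_finite φ hφ
  have hsep : ∀ x : X, ∃ U, IsClopen U ∧ x ∈ U ∧ ∀ y ∈ F.erase x, y ∉ U :=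
    fun x => sep h0 x (F.erase x) (Finset.notMem_erase x F)
  choose U hU1 hU2 hU3 using hsep
  refine ⟨Finsupp.onFinset F (fun x => if x ∈ F then φ (chi (U x) (hU1 x)) else 0)
    (fun x hx => by by_contra h; simp [h] at hx), fun f => ?_⟩
  have key : φ f = ∑ x ∈ F, φ (chi (U x) (hU1 x)) * f x := by
    have hg : φ (f - ∑ x ∈ F, f x • chi (U x) (hU1 x)) = 0 := by
      apply hF
      intro y hy
      have : (f - ∑ x ∈ F, f x • chi (U x) (hU1 x)) y
          = f y - ∑ x ∈ F, f x • (chi (U x) (hU1 x)) y := by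
        rw [← evAt_apply, map_sub, map_sum]
        simp only [map_zsmul, evAt_apply]
      rw [this, Finset.sum_eq_single y (fun x hx hxy => by
          have : y ∉ U x := hU3 x y (Finset.mem_erase.2 ⟨fun h => hxy h.symm, hy⟩)
          rw [chi_apply, if_neg this, smul_zero])
        (fun h => (h hy).elim), chi_apply, if_pos (hU2 y)]
      simp
    rw [map_sub, map_sum] at hg
    have : ∀ x ∈ F, φ (f x • chi (U x) (hU1 x)) = φ (chi (U x) (hU1 x)) * f x := by
      intro x _
      rw [map_zsmul, smul_eq_mul, mul_comm]
    rw [Finset.sum_congr rfl this] at hg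
    omega
  rw [key, Finsupp.sum_of_support_subset _ (Finsupp.support_onFinset_subset) _ (by simp)]
  refine Finset.sum_congr rfl fun x hx => ?_
  simp [Finsupp.onFinset, hx]

-- the hom attached to a finsupp
noncomputable def homOf (n : X →₀ ℤ) : CpZ X →+ ℤ where
  toFun := fun f => n.sum fun x c => c * f x
  map_zero' := by
    simp [Finsupp.sum, show ∀ x : X, (0 : CpZ X) x = (0:ℤ) from fun _ => rfl]
  map_add' := fun f g => by
    have : ∀ x : X, (f + g) x = f x + g x := fun x => rfl
    simp only [this, mul_add]
    exact Finsupp.sum_add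

lemma homOf_cont (n : X →₀ ℤ) : Continuous (homOf n) := by
  have : (homOf n : CpZ X → ℤ) = fun f => ∑ x ∈ n.support, n x * f x := rfl
  rw [this]
  exact continuous_finset_sum _ fun x _ => continuous_const.mul (eval_continuous x)

noncomputable def Phi : (X →₀ ℤ) →+ contHomZGroup X where
  toFun := fun n => ⟨homOf n, homOf_cont n⟩
  map_zero' := by
    apply Subtype.ext
    apply AddMonoidHom.ext
    intro f
    simp [homOf]
  map_add' := fun m n => by
    apply Subtype.ext
    apply AddMonoidHom.ext
    intro f
    show (m + n).sum (fun x c => c * f x) = m.sum (fun x c => c * f x) + n.sum (fun x c => c * f x)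
    exact Finsupp.sum_add_index' (fun x => by simp) (fun x b₁ b₂ => add_mul b₁ b₂ (f x))

lemma Phi_bij [T2Space X] (h0 : IsTopologicalBasis {s : Set X | IsClopen s}) :
    Function.Bijective (Phi (X := X)) := by
  constructor
  · rw [injective_iff_map_eq_zero]
    intro n hn
    apply inj0 h0
    intro f
    have := congrArg (fun ψ : contHomZGroup X => ψ.1 f) hn
    simpa [Phi, homOf] using this
  · rintro ⟨φ, hφ⟩
    obtain ⟨n, hn⟩ := exists_rep h0 φ hφ
    refine ⟨n, Subtype.ext (AddMonoidHom.ext fun f => ?_)⟩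
    exact (hn f).symm


end Aux

/-- For a `0`-dimensional space `X`, every continuous homomorphism `φ : C_p(X,ℤ) → ℤ` is
given by a unique finitely supported `n : X → ℤ` via `φ f = ∑ n x * f x`, and `φ ↦ n` is a
group isomorphism onto the free abelian group `ℤ^(X)`. -/
theorem stmt12 (X : Type*) [TopologicalSpace X] [T2Space X]
    (h0 : IsTopologicalBasis {s : Set X | IsClopen s}) :
    (∀ φ : CpZ X →+ ℤ, Continuous φ →
      ∃! n : X →₀ ℤ, ∀ f : CpZ X, φ f = n.sum fun x c => c * f x) ∧
    ∃ e : contHomZGroup X ≃+ (X →₀ ℤ),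
      ∀ (φ : contHomZGroup X) (f : CpZ X), φ.1 f = (e φ).sum fun x c => c * f x := by
  
  constructor
  · intro φ hφ
    obtain ⟨n, hn⟩ := exists_rep h0 φ hφ
    refine ⟨n, hn, fun m hm => ?_⟩
    have hd : ∀ f : CpZ X, ((m - n).sum fun x c => c * f x) = 0 := by
      intro f
      rw [Finsupp.sum_sub_index (fun x b₁ b₂ => sub_mul b₁ b₂ (f x))]
      rw [← hm f, ← hn f, sub_self]
    have := inj0 h0 (m - n) hd
    exact sub_eq_zero.1 this
  · refine ⟨(AddEquiv.ofBijective Phi (Phi_bij h0)).symm, fun φ f => ?_⟩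
    have h1 : Phi ((AddEquiv.ofBijective Phi (Phi_bij h0)).symm φ) = φ := by
      exact (AddEquiv.ofBijective Phi (Phi_bij h0)).apply_symm_apply φ
    conv_lhs => rw [← h1]
    rfl
end

section
/- Let X be a 0-dimensional space such that every function f : X → ℤ whose restriction to each compact subset of X is continuous is itself continuous (i.e. X is a k_ℕ-space). For u : X → 𝕋 let χ_u : A_p(X) → 𝕋 denote the group homomorphism φ ↦ ∑_{x∈X} φ(x)·u(x). Then χ_u is continuous if and only if there exist m ∈ ℕ, continuous functions g_1, …, g_m ∈ C(X,ℤ) and elements t_1, …, t_m ∈ 𝕋 such that u(x) = ∑_{k=1}^m g_k(x)·t_k for every x ∈ X. -/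
open TopologicalSpace

/-- `A_p(X)`: the free abelian group on `X`, realized as finitely supported `φ : X → ℤ`,
with the topology of pointwise convergence on `C(X,ℤ)`, i.e. the coarsest topology making
`φ ↦ ∑ φ x * g x` continuous into the discrete `ℤ` for every `g ∈ C(X,ℤ)`. -/
instance ApTop (X : Type*) [TopologicalSpace X] : TopologicalSpace (X →₀ ℤ) :=
  TopologicalSpace.induced
    (fun (φ : X →₀ ℤ) (g : C(X, ℤ)) => φ.sum fun x n => n * g x) Pi.topologicalSpace


private lemma circ_norm_of_mem {x : ℝ} (h0 : 0 ≤ x) (h1 : x < 1) :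
    ‖(x : Circ)‖ = min x (1 - x) := by
  rw [UnitAddCircle.norm_eq, abs_sub_round_eq_min, Int.fract_eq_self.mpr ⟨h0, h1⟩]

private lemma circ_exists_mul {r : ℝ} (h0 : 0 < r) (h2 : r ≤ 1/2) :
    ∃ n : ℕ, 1/3 ≤ (n : ℝ) * r ∧ (n : ℝ) * r < 2/3 := by
  refine ⟨⌈(1/3)/r⌉₊, ?_, ?_⟩
  · have h := Nat.le_ceil ((1/3)/r)
    have := mul_le_mul_of_nonneg_right h h0.le
    rwa [div_mul_cancel₀ _ h0.ne'] at this
  · rcases le_or_gt (⌈(1/3)/r⌉₊ : ℝ) 1 with h | h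
    · nlinarith
    · have hr : r < 1/3 := by
        have h1 : 1 < ⌈(1/3)/r⌉₊ := by exact_mod_cast h
        have := (Nat.lt_ceil).mp h1
        push_cast at this
        rw [lt_div_iff₀ h0] at this
        linarith
      have hn : (⌈(1/3)/r⌉₊ : ℝ) < (1/3)/r + 1 := Nat.ceil_lt_add_one (by positivity)
      have := mul_lt_mul_of_pos_right hn h0
      rw [add_mul, div_mul_cancel₀ _ h0.ne'] at this
      linarith

private lemma circ_aux {r : ℝ} (h0 : 0 < r) (h2 : r ≤ 1/2)
    (h : ∀ n : ℕ, ‖n • ((r : ℝ) : Circ)‖ < 1/3) : False := by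
  obtain ⟨n, hn1, hn2⟩ := circ_exists_mul h0 h2
  have e : (n • ((r:ℝ) : Circ)) = (((n : ℝ) * r : ℝ) : Circ) := by
    rw [← AddCircle.coe_nsmul, nsmul_eq_mul]
  have hh := h n
  rw [e, circ_norm_of_mem (by linarith) (by linarith)] at hh
  have : (1:ℝ)/3 ≤ min ((n:ℝ)*r) (1 - (n:ℝ)*r) := le_min hn1 (by linarith)
  linarith

private lemma circ_eq_zero {z : Circ} (h : ∀ n : ℕ, ‖n • z‖ < 1/3) : z = 0 := by
  haveI : Fact ((0:ℝ) < 1) := ⟨one_pos⟩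
  obtain ⟨r, hr, rfl⟩ := AddCircle.eq_coe_Ico z
  rcases eq_or_lt_of_le hr.1 with he | h0
  · rw [← he]; exact (QuotientAddGroup.mk_zero _)
  rcases le_or_gt r (1/2) with hle | hgt
  · exact (circ_aux h0 hle h).elim
  · have hneg : ((1 - r : ℝ) : Circ) = -((r:ℝ):Circ) := by
      rw [eq_neg_iff_add_eq_zero, ← AddCircle.coe_add]
      rw [sub_add_cancel]
      exact AddCircle.coe_period 1
    exact (circ_aux (r := 1 - r) (by linarith [hr.2]) (by linarith)
      (fun n => by rw [hneg, smul_neg, norm_neg]; exact h n)).elim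

/-- Let `X` be a `0`-dimensional `k_ℕ`-space. The character `χ_u : A_p(X) → 𝕋`,
`φ ↦ ∑ φ x • u x`, is continuous iff `u = ∑ k, g_k • t_k` pointwise, for finitely many
continuous `g_k ∈ C(X,ℤ)` and `t_k ∈ 𝕋`. -/
theorem stmt13 (X : Type*) [TopologicalSpace X] [T2Space X]
    (h0 : IsTopologicalBasis {s : Set X | IsClopen s})
    (hk : ∀ f : X → ℤ, (∀ K : Set X, IsCompact K → ContinuousOn f K) → Continuous f)
    (u : X → Circ) :
    (Continuous fun φ : X →₀ ℤ => φ.sum fun x n => n • u x) ↔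
      ∃ (m : ℕ) (g : Fin m → C(X, ℤ)) (t : Fin m → Circ),
        ∀ x : X, u x = ∑ k, g k x • t k := by
  classical
  set Φ : (X →₀ ℤ) → (C(X, ℤ) → ℤ) := fun φ g => φ.sum fun x n => n * g x with hΦ
  constructor
  · intro hcont
    -- the character as an AddMonoidHom
    let c : (X →₀ ℤ) →+ Circ :=
      { toFun := fun φ => φ.sum fun x n => n • u x
        map_zero' := Finsupp.sum_zero_index
        map_add' := fun φ ψ => by
          exact Finsupp.sum_add_index' (h := fun x n => n • u x)
            (fun x => zero_zsmul (u x)) (fun x b₁ b₂ => add_zsmul (u x) b₁ b₂) }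
    have hS : @IsOpen _ (TopologicalSpace.induced Φ Pi.topologicalSpace)
        ((fun φ : X →₀ ℤ => φ.sum fun x n => n • u x) ⁻¹' Metric.ball 0 (1/3)) :=
      hcont.isOpen_preimage _ Metric.isOpen_ball
    rw [isOpen_induced_iff] at hS
    obtain ⟨W, hW, hWpre⟩ := hS
    have h0W : Φ 0 ∈ W := by
      have : (0 : X →₀ ℤ) ∈ Φ ⁻¹' W := by
        rw [hWpre]
        simp only [Set.mem_preimage, Finsupp.sum_zero_index, Metric.mem_ball,
          dist_self]
        norm_num
      exact this
    rw [isOpen_pi_iff] at hW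
    obtain ⟨I, w, hw, hsub⟩ := hW (Φ 0) h0W
    have hΦ0 : ∀ g : C(X, ℤ), Φ 0 g = 0 := fun g => Finsupp.sum_zero_index
    have key : ∀ φ : X →₀ ℤ, (∀ g ∈ I, Φ φ g = 0) → ‖c φ‖ < 1/3 := by
      intro φ hφ
      have hmem : Φ φ ∈ (I : Set C(X, ℤ)).pi w := by
        intro g hg
        rw [hφ g hg]
        have := (hw g hg).2
        rwa [hΦ0 g] at this
      have : φ ∈ Φ ⁻¹' W := hsub hmem
      rw [hWpre] at this
      simpa [c, Real.dist_eq] using this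
    set m := I.card with hm
    set G : Fin m → C(X, ℤ) := fun k => ((I.equivFin.symm k : C(X, ℤ))) with hG
    let P : (X →₀ ℤ) →+ (Fin m → ℤ) :=
      { toFun := fun φ k => φ.sum fun x n => n * (G k) x
        map_zero' := by
          funext k
          show (0 : X →₀ ℤ).sum (fun x n => n * (G k) x) = 0
          exact Finsupp.sum_zero_index
        map_add' := fun φ ψ => by
          funext k
          show (φ + ψ).sum (fun x n => n * (G k) x) = _
          exact Finsupp.sum_add_index' (h := fun x n => n * (G k) x)
            (fun x => zero_mul _) (fun x b₁ b₂ => add_mul b₁ b₂ _) }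
    have hker : ∀ φ ∈ P.ker, c φ = 0 := by
      intro φ hφ
      rw [AddMonoidHom.mem_ker] at hφ
      apply circ_eq_zero
      intro n
      rw [← map_nsmul c]
      apply key
      intro g hg
      have hGk : G (I.equivFin ⟨g, hg⟩) = g := by
        simp [hG]
      have : Φ (n • φ) g = P (n • φ) (I.equivFin ⟨g, hg⟩) := by
        rw [hΦ]; dsimp [P]; rw [hGk]
      rw [this, map_nsmul P, hφ]
      simp
    let c' : (X →₀ ℤ) ⧸ P.ker →+ Circ := QuotientAddGroup.lift P.ker c hker
    obtain ⟨h, hh⟩ := (Module.Baer.of_divisible Circ).extension_property_addMonoidHom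
      (QuotientAddGroup.kerLift P) (QuotientAddGroup.kerLift_injective P) c'
    have key2 : ∀ φ : X →₀ ℤ, h (P φ) = c φ := by
      intro φ
      have e1 : QuotientAddGroup.kerLift P (QuotientAddGroup.mk φ) = P φ :=
        QuotientAddGroup.kerLift_mk P φ
      calc h (P φ) = (h.comp (QuotientAddGroup.kerLift P)) (QuotientAddGroup.mk φ) := by
            rw [AddMonoidHom.comp_apply, e1]
        _ = c' (QuotientAddGroup.mk φ) := by rw [hh]
        _ = c φ := rfl
    refine ⟨m, G, fun k => h (Pi.single k 1), fun x => ?_⟩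
    have e1 : c (Finsupp.single x 1) = u x := by
      dsimp [c]
      rw [Finsupp.sum_single_index (zero_zsmul (u x)), one_zsmul]
    have e2 : P (Finsupp.single x 1) = fun k => G k x := by
      funext k
      dsimp [P]
      rw [Finsupp.sum_single_index (zero_mul ((G k) x)), one_mul]
    have e3 : (fun k => G k x) = ∑ k, (G k x) • Pi.single k (1:ℤ) := by
      rw [← Finset.univ_sum_single (fun k => G k x)]
      refine Finset.sum_congr rfl fun k _ => ?_
      rw [← Pi.single_smul, smul_eq_mul, mul_one]
    rw [← e1, ← key2, e2, e3, map_sum]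
    refine Finset.sum_congr rfl fun k _ => ?_
    rw [map_zsmul]
  · rintro ⟨m, g, t, hu⟩
    have key : (fun φ : X →₀ ℤ => φ.sum fun x n => n • u x)
        = fun φ => ∑ k, (Φ φ (g k)) • t k := by
      funext φ
      calc φ.sum (fun x n => n • u x)
          = ∑ x ∈ φ.support, ∑ k, (φ x * g k x) • t k := by
            refine Finset.sum_congr rfl fun x hx => ?_
            show φ x • u x = ∑ k, (φ x * g k x) • t k
            rw [hu x, Finset.smul_sum]
            exact Finset.sum_congr rfl fun k _ => (mul_zsmul (t k) (φ x) (g k x)).symm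
        _ = ∑ k, (Φ φ (g k)) • t k := by
            rw [Finset.sum_comm]
            refine Finset.sum_congr rfl fun k _ => ?_
            rw [hΦ]
            exact (map_sum (zmultiplesHom Circ (t k)) (fun x => φ x * g k x) φ.support).symm
    rw [key]
    apply continuous_finset_sum
    intro k _
    have h1 : Continuous Φ := continuous_induced_dom
    have h2 : Continuous fun φ : X →₀ ℤ => Φ φ (g k) := (continuous_apply (g k)).comp h1
    exact (continuous_of_discreteTopology (f := fun z : ℤ => z • t k)).comp h2
end

section
/- Let X be a 0-dimensional space and let χ : C_p(X,ℤ) → 𝕋 be a continuous character. Then there exists a continuous character χ̃ : C_p(X,ℝ) → 𝕋 such that χ̃(f) = χ(f) for every f ∈ C(X,ℤ) (viewing C(X,ℤ) as a subgroup of C(X,ℝ) via the inclusion ℤ ⊆ ℝ); that is, C_p(X,ℤ) is dually embedded in C_p(X,ℝ). -/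
open TopologicalSpace

/-- `C_p(X,ℝ)`: the group of continuous real-valued functions on `X` under pointwise
addition, equipped with the topology of pointwise convergence. -/
def CpR (X : Type*) [TopologicalSpace X] : Type _ := C(X, ℝ)

noncomputable instance (X : Type*) [TopologicalSpace X] : FunLike (CpR X) X ℝ :=
  inferInstanceAs (FunLike C(X, ℝ) X ℝ)

noncomputable instance (X : Type*) [TopologicalSpace X] : AddCommGroup (CpR X) :=
  inferInstanceAs (AddCommGroup C(X, ℝ))

noncomputable instance (X : Type*) [TopologicalSpace X] : TopologicalSpace (CpR X) :=
  TopologicalSpace.induced (fun f : CpR X => (f : X → ℝ)) Pi.topologicalSpace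

/-- The natural inclusion `C(X,ℤ) → C(X,ℝ)` induced by `ℤ ⊆ ℝ`. -/
noncomputable def inclZR {X : Type*} [TopologicalSpace X] (f : CpZ X) : CpR X :=
  ⟨fun x => ((f : X → ℤ) x : ℝ),
    Continuous.comp continuous_of_discreteTopology (ContinuousMap.continuous f)⟩

/-- No small subgroups in the circle. -/
lemma nss (t : AddCircle (1 : ℝ)) (h : ∀ n : ℤ, ‖n • t‖ < 4⁻¹) : t = 0 := by
  by_contra ht
  obtain ⟨x, rfl⟩ := QuotientAddGroup.mk_surjective t
  set r : ℝ := x - round x with hr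
  have hcoe : ((r : ℝ) : AddCircle (1 : ℝ)) = (x : AddCircle (1 : ℝ)) := by
    rw [hr]; simp [QuotientAddGroup.mk_sub]
  have hnorm : ∀ n : ℕ, |(n : ℝ) * r| ≤ 2⁻¹ → ‖((n : ℤ) • (x : AddCircle (1 : ℝ)))‖ = |(n : ℝ) * r| := by
    intro n hn
    rw [← hcoe, ← QuotientAddGroup.mk_zsmul]
    have : (n : ℤ) • r = (n : ℝ) * r := by push_cast [zsmul_eq_mul]; ring
    rw [this, AddCircle.norm_coe_eq_abs_iff (1 : ℝ) one_ne_zero]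
    simpa using hn
  have hδ : ‖(x : AddCircle (1:ℝ))‖ = |r| := by
    rw [AddCircle.norm_eq]; simp [hr]
  have hδpos : 0 < |r| := by
    rw [← hδ]; exact norm_pos_iff.mpr ht
  have h1 : |r| < 4⁻¹ := by
    have := h 1; rwa [one_smul, hδ] at this
  set n : ℕ := ⌈(4⁻¹ : ℝ) / |r|⌉₊ with hn
  have hge : (4⁻¹ : ℝ) ≤ n * |r| := by
    rw [← div_le_iff₀ hδpos]
    exact Nat.le_ceil _
  have hlt : (n : ℝ) * |r| < 2⁻¹ := by
    have hn1 : 1 ≤ n := Nat.one_le_ceil_iff.mpr (by positivity)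
    have : ((n : ℝ) - 1) * |r| < 4⁻¹ := by
      have hcl : ((n : ℝ) - 1) < (4⁻¹ : ℝ) / |r| := by
        have h2 := Nat.ceil_lt_add_one (a := (4⁻¹ : ℝ) / |r|) (by positivity)
        rw [← hn] at h2
        linarith
      calc ((n:ℝ) - 1) * |r| < ((4⁻¹:ℝ)/|r|) * |r| := by
            apply mul_lt_mul_of_pos_right hcl hδpos
        _ = 4⁻¹ := div_mul_cancel₀ _ hδpos.ne'
    nlinarith
  have := h n
  rw [hnorm n (by rw [abs_mul, Nat.abs_cast]; exact hlt.le)] at this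
  rw [abs_mul, Nat.abs_cast] at this
  linarith [hge]

lemma nssV : ∃ V ∈ nhds (0 : Circ), ∀ t : Circ, (∀ n : ℤ, n • t ∈ V) → t = 0 := by
  refine ⟨Metric.ball 0 4⁻¹, Metric.ball_mem_nhds _ (by norm_num), fun t ht => ?_⟩
  exact nss t fun n => mem_ball_zero_iff.mp (ht n)

theorem stmtA (X : Type*) [TopologicalSpace X]
    (χ : CpZ X →+ Circ) (hχ : Continuous χ) :
    ∃ F : Finset X, ∀ f : CpZ X, (∀ x ∈ F, f x = 0) → χ f = 0 := by
  obtain ⟨V, hV, hVs⟩ := nssV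
  have h0 : χ 0 = 0 := map_zero χ
  have hnb : χ ⁻¹' V ∈ nhds (0 : CpZ X) := by
    have := hχ.continuousAt (x := (0 : CpZ X))
    exact this (h0 ▸ hV)
  rw [nhds_induced (fun f : CpZ X => (f : X → ℤ)) 0] at hnb
  obtain ⟨S, hS, hSsub⟩ := hnb
  have hS' : S ∈ nhds (0 : X → ℤ) := hS
  rw [nhds_pi, Filter.mem_pi] at hS'
  obtain ⟨I, hIfin, u, hu, husub⟩ := hS'
  refine ⟨hIfin.toFinset, fun f hf => ?_⟩
  have ev : ∀ (y : X) (g : CpZ X) (n : ℤ), (n • g) y = n • (g y) := fun y g n =>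
    map_zsmul (AddMonoidHom.mk' (fun g : CpZ X => g y) (fun a b => rfl)) n g
  apply hVs
  intro n
  rw [← map_zsmul]
  apply hSsub
  apply husub
  intro x hx
  show (n • f) x ∈ u x
  rw [ev x f n, hf x (hIfin.mem_toFinset.mpr hx), smul_zero]
  exact mem_of_mem_nhds (hu x)


theorem stmtB (X : Type*) [TopologicalSpace X]
    (χ : CpZ X →+ Circ) (hχ : Continuous χ) :
    ∃ (n : ℕ) (p : Fin n → X) (c : Fin n → ℝ),
      ∀ f : CpZ X, χ f = ∑ i, (f (p i) : ℤ) • ((c i : ℝ) : Circ) := by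
  obtain ⟨F, hF⟩ := stmtA X χ hχ
  classical
  set n := F.card
  set e : Fin n → X := fun i => (F.equivFin.symm i : X)
  -- restriction hom
  set ρ : CpZ X →+ (Fin n → ℤ) :=
    AddMonoidHom.mk' (fun f i => f (e i)) (fun a b => rfl) with hρ
  have key : ∀ f g : CpZ X, ρ f = ρ g → χ f = χ g := by
    intro f g h
    have : χ (f - g) = 0 := by
      apply hF
      intro x hx
      have : (f - g) x = f x - g x :=
        map_sub (AddMonoidHom.mk' (fun u : CpZ X => u x) (fun a b => rfl)) f g
      rw [this]
      have := congrFun h (F.equivFin ⟨x, hx⟩)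
      change f (e (F.equivFin ⟨x, hx⟩)) = g (e (F.equivFin ⟨x, hx⟩)) at this
      simp only [ρ, AddMonoidHom.mk'_apply, e, Equiv.symm_apply_apply] at this
      omega
    have h2 : χ f - χ g = 0 := by rw [← map_sub χ f g]; exact this
    exact sub_eq_zero.mp h2
  -- descend χ to the range of ρ
  have hmem : ∀ h : (AddMonoidHom.range ρ), ∃ f : CpZ X, ρ f = h := fun h => h.2
  set φ : (AddMonoidHom.range ρ) →+ Circ :=
    AddMonoidHom.mk' (fun h => χ (hmem h).choose) (by
      intro a b
      show χ (hmem (a + b)).choose = χ (hmem a).choose + χ (hmem b).choose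
      rw [← map_add χ]
      apply key
      rw [(hmem (a + b)).choose_spec, map_add, (hmem a).choose_spec,
        (hmem b).choose_spec]
      rfl) with hφ
  -- extend φ to all of Fin n → ℤ using injectivity of the circle
  haveI : CategoryTheory.Injective (AddCommGrpCat.of Circ) :=
    AddCommGrpCat.injective_of_divisible _
  haveI : CategoryTheory.Mono (AddCommGrpCat.ofHom (AddMonoidHom.range ρ).subtype) := by
    rw [AddCommGrpCat.mono_iff_injective]
    exact Subtype.val_injective
  set ψC := CategoryTheory.Injective.factorThru (AddCommGrpCat.ofHom φ)
      (AddCommGrpCat.ofHom (AddMonoidHom.range ρ).subtype)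
  set ψ : (Fin n → ℤ) →+ Circ := ψC.hom with hψ
  have hfact : ∀ h : (AddMonoidHom.range ρ), ψ h.1 = φ h := by
    intro h
    have := CategoryTheory.Injective.comp_factorThru (AddCommGrpCat.ofHom φ)
      (AddCommGrpCat.ofHom (AddMonoidHom.range ρ).subtype)
    exact DFunLike.congr_fun (congrArg (fun q => q.hom) this) h
  -- choose real lifts of ψ on basis vectors
  set c : Fin n → ℝ := fun i => (QuotientAddGroup.mk_surjective (ψ (Pi.single i 1))).choose
    with hc
  have hcspec : ∀ i, ((c i : ℝ) : Circ) = ψ (Pi.single i 1) := fun i =>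
    (QuotientAddGroup.mk_surjective (ψ (Pi.single i 1))).choose_spec
  refine ⟨n, e, c, fun f => ?_⟩
  have h1 : χ f = ψ (ρ f) := by
    have := hfact ⟨ρ f, ⟨f, rfl⟩⟩
    rw [this]
    exact (key _ _ (hmem ⟨ρ f, ⟨f, rfl⟩⟩).choose_spec).symm
  rw [h1]
  have h2 : ρ f = ∑ i, (f (e i)) • Pi.single i (1 : ℤ) := by
    funext j
    simp [ρ, Finset.sum_apply, Pi.single_apply]
    rfl
  rw [h2, map_sum]
  congr 1
  funext i
  rw [map_zsmul, hcspec]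

/-- For a `0`-dimensional space `X`, every continuous character `χ : C_p(X,ℤ) → 𝕋`
extends to a continuous character `χ̃ : C_p(X,ℝ) → 𝕋`; that is, `C_p(X,ℤ)` is dually
embedded in `C_p(X,ℝ)`. -/
theorem stmt15 (X : Type*) [TopologicalSpace X] [T2Space X]
    (h0 : IsTopologicalBasis {s : Set X | IsClopen s})
    (χ : CpZ X →+ Circ) (hχ : Continuous χ) :
    ∃ χ' : CpR X →+ Circ, Continuous χ' ∧ ∀ f : CpZ X, χ' (inclZR f) = χ f := by
  obtain ⟨n, p, c, hrep⟩ := stmtB X χ hχ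
  refine ⟨AddMonoidHom.mk' (fun g : CpR X => ∑ i, (((g (p i) * c i : ℝ)) : Circ)) ?_, ?_, ?_⟩
  · intro a b
    rw [← Finset.sum_add_distrib]
    show ∑ i, (((((a + b) (p i)) * c i : ℝ)) : Circ) = _
    congr 1
    funext i
    have : (a + b) (p i) = a (p i) + b (p i) := rfl
    rw [this, add_mul, QuotientAddGroup.mk_add]
  · show Continuous fun g : CpR X => ∑ i, (((g (p i) * c i : ℝ)) : Circ)
    apply continuous_finset_sum
    intro i _
    apply Continuous.comp continuous_quotient_mk'
    exact ((continuous_apply (A := fun _ : X => ℝ) (p i)).comp continuous_induced_dom).mul continuous_const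
  · intro f
    rw [hrep f]
    show ∑ i, (((inclZR f (p i) * c i : ℝ)) : Circ) = _
    congr 1
    funext i
    have h1 : inclZR f (p i) = ((f (p i) : ℤ) : ℝ) := rfl
    rw [h1, ← zsmul_eq_mul, QuotientAddGroup.mk_zsmul]
end

section
/- Let X be a 0-dimensional space and let D be a compact subset of the dual group of C_p(X,ℤ) (the group of continuous characters of C_p(X,ℤ) equipped with the compact-open topology). Then D has finite support: there exists a finite set F ⊆ X such that χ(f) = 0 for every χ ∈ D and every f ∈ C(X,ℤ) with f(x) = 0 for all x ∈ F. -/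
open TopologicalSpace Topology Filter

/-! ### Auxiliary material -/

section Aux

open scoped Classical

variable {X : Type*} [TopologicalSpace X]

/-- Evaluation at a point as an additive group hom. -/
noncomputable def CpZ.evHom (x : X) : CpZ X →+ ℤ where
  toFun f := f x
  map_zero' := rfl
  map_add' _ _ := rfl

@[simp] lemma CpZ.evHom_apply (x : X) (f : CpZ X) : CpZ.evHom x f = f x := rfl

@[simp] lemma CpZ.zero_apply (x : X) : (0 : CpZ X) x = 0 := rfl

@[simp] lemma CpZ.add_apply (f g : CpZ X) (x : X) : (f + g) x = f x + g x := rfl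

@[simp] lemma CpZ.sub_apply (f g : CpZ X) (x : X) : (f - g) x = f x - g x :=
  map_sub (CpZ.evHom x) f g

@[simp] lemma CpZ.nsmul_apply (k : ℕ) (f : CpZ X) (x : X) : (k • f) x = k • f x :=
  map_nsmul (CpZ.evHom x) k f

@[simp] lemma CpZ.zsmul_apply (k : ℤ) (f : CpZ X) (x : X) : (k • f) x = k • f x :=
  map_zsmul (CpZ.evHom x) k f

lemma CpZ.sum_apply {ι : Type*} (s : Finset ι) (h : ι → CpZ X) (x : X) :
    (∑ i ∈ s, h i) x = ∑ i ∈ s, h i x :=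
  map_sum (CpZ.evHom x) h s

lemma CpZ.ext {f g : CpZ X} (h : ∀ x, f x = g x) : f = g := DFunLike.ext f g h

/-- The indicator function of a clopen set, as an element of `CpZ X` (junk value `0` if
the set is not clopen). -/
noncomputable def indC (A : Set X) : CpZ X :=
  if hA : IsClopen A then
    ⟨fun x => if x ∈ A then 1 else 0, by
      refine IsLocallyConstant.continuous (fun s => ?_)
      classical
      have : (fun x => if x ∈ A then (1 : ℤ) else 0) ⁻¹' s =
          (if (1 : ℤ) ∈ s then A else ∅) ∪ (if (0 : ℤ) ∈ s then Aᶜ else ∅) := by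
        ext x
        by_cases hx : x ∈ A <;> by_cases h1 : (1 : ℤ) ∈ s <;> by_cases h2 : (0 : ℤ) ∈ s <;>
          simp [hx, h1, h2]
      rw [this]
      apply IsOpen.union <;> split_ifs <;>
        simp [hA.isOpen, hA.compl.isOpen, isOpen_empty]⟩
  else 0

lemma indC_apply {A : Set X} (hA : IsClopen A) (x : X) :
    indC A x = if x ∈ A then 1 else 0 := by
  unfold indC; exact congrFun (congrArg DFunLike.coe (dif_pos hA)) x

lemma indC_of_mem {A : Set X} (hA : IsClopen A) {x : X} (hx : x ∈ A) : indC A x = 1 := by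
  rw [indC_apply hA, if_pos hx]

lemma indC_of_not_mem {A : Set X} (hA : IsClopen A) {x : X} (hx : x ∉ A) : indC A x = 0 := by
  rw [indC_apply hA, if_neg hx]

/-- If `A' ⊆ A` are clopen, then the indicator of `A \ A'` is the difference of indicators. -/
lemma indC_diff {A A' : Set X} (hA : IsClopen A) (hA' : IsClopen A') (h : A' ⊆ A) :
    indC (A \ A') = indC A - indC A' := by
  have hd : IsClopen (A \ A') := by
    rw [Set.diff_eq]; exact hA.inter hA'.compl
  refine CpZ.ext fun y => ?_
  rw [CpZ.sub_apply, indC_apply hd, indC_apply hA, indC_apply hA']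
  by_cases hy' : y ∈ A'
  · simp [hy', h hy']
  · by_cases hy : y ∈ A <;> simp [hy, hy']

/-- Amplification: any nonzero element of the circle has a multiple of norm at least `1/4`. -/
lemma circ_amp {t : Circ} (ht : t ≠ 0) : ∃ k : ℕ, (1 : ℝ) / 4 ≤ ‖(k • t : Circ)‖ := by
  by_cases hbig : (1 : ℝ) / 4 ≤ ‖t‖
  · exact ⟨1, by simpa using hbig⟩
  push_neg at hbig
  have ha0 : 0 < ‖t‖ := norm_pos_iff.mpr ht
  obtain ⟨x, rfl⟩ : ∃ x : ℝ, (x : Circ) = t := QuotientAddGroup.mk_surjective t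
  have hnorm : ‖((x : ℝ) : Circ)‖ = |x - round x| := UnitAddCircle.norm_eq
  set u : ℝ := x - round x with hu
  have hcoe : ((u : ℝ) : Circ) = (x : Circ) := by
    rw [hu, AddCircle.coe_sub, sub_eq_self]
    exact (AddCircle.coe_eq_zero_iff (1 : ℝ)).mpr ⟨round x, by simp⟩
  set b : ℝ := |u| with hb
  have hbnorm : ‖((x : ℝ) : Circ)‖ = b := hnorm
  have hb0 : 0 < b := hbnorm ▸ ha0
  have hbsmall : b < 1 / 4 := hbnorm ▸ hbig
  -- the key: ‖k • t‖ = ‖((k * b : ℝ) : Circ)‖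
  have hbcoe : ((b : ℝ) : Circ) = (x : Circ) ∨ ((b : ℝ) : Circ) = -((x : ℝ) : Circ) := by
    rcases abs_cases u with ⟨h1, _⟩ | ⟨h1, _⟩
    · exact Or.inl (by rw [hb, h1, hcoe])
    · exact Or.inr (by rw [hb, h1, AddCircle.coe_neg, hcoe])
  have key : ∀ k : ℕ, ‖(k • ((x : ℝ) : Circ) : Circ)‖ = ‖(((k : ℝ) * b : ℝ) : Circ)‖ := by
    intro k
    have hmul : (((k : ℝ) * b : ℝ) : Circ) = k • ((b : ℝ) : Circ) := by
      rw [← AddCircle.coe_nsmul, nsmul_eq_mul]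
    rcases hbcoe with h | h
    · rw [hmul, h]
    · rw [hmul, h, smul_neg, norm_neg]
  -- choose k
  set k : ℕ := ⌈1 / (4 * b)⌉₊ with hk
  have hk1 : 1 / 4 ≤ (k : ℝ) * b := by
    have h1 : 1 / (4 * b) ≤ (k : ℝ) := Nat.le_ceil _
    have := mul_le_mul_of_nonneg_right h1 hb0.le
    calc (1 : ℝ) / 4 = 1 / (4 * b) * b := by field_simp
      _ ≤ (k : ℝ) * b := this
  have hk2 : (k : ℝ) * b < 1 / 2 := by
    have h1 : (k : ℝ) < 1 / (4 * b) + 1 := Nat.ceil_lt_add_one (by positivity)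
    have h2 := mul_lt_mul_of_pos_right h1 hb0
    have h3 : (1 / (4 * b) + 1) * b = 1 / 4 + b := by field_simp
    rw [h3] at h2
    linarith
  refine ⟨k, ?_⟩
  rw [key k]
  have hround : round ((k : ℝ) * b) = 0 := by
    rw [round_eq_zero_iff]
    constructor
    · have : (0 : ℝ) ≤ (k : ℝ) * b := by positivity
      linarith
    · exact hk2
  have : ‖(((k : ℝ) * b : ℝ) : Circ)‖ = |(k : ℝ) * b - round ((k : ℝ) * b)| :=
    UnitAddCircle.norm_eq
  rw [this, hround]
  rw [Int.cast_zero, sub_zero, abs_of_nonneg (by positivity)]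
  exact hk1

/-- Every continuous character of `CpZ X` has a finite "support" `F`: it kills every
function vanishing on `F`. -/
lemma support_exists (χ : ContinuousAddMonoidHom (CpZ X) Circ) :
    ∃ F : Finset X, ∀ f : CpZ X, (∀ x ∈ F, f x = 0) → χ f = 0 := by
  classical
  have hU : {t : Circ | ‖t‖ < 1 / 4} ∈ 𝓝 (χ 0) := by
    rw [map_zero]
    have heq : {t : Circ | ‖t‖ < 1 / 4} = Metric.ball (0 : Circ) (1 / 4) := by
      ext s; simp [Metric.mem_ball, dist_zero_right]
    rw [heq]
    exact Metric.ball_mem_nhds _ (by norm_num)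
  have h2 : χ ⁻¹' {t : Circ | ‖t‖ < 1 / 4} ∈ 𝓝 (0 : CpZ X) :=
    (map_continuous χ).continuousAt.preimage_mem_nhds hU
  rw [nhds_induced (fun f : CpZ X => (f : X → ℤ)) 0] at h2
  obtain ⟨W, hW, hWsub⟩ := Filter.mem_comap.mp h2
  rw [nhds_pi] at hW
  obtain ⟨I, hIfin, t, ht, hsub⟩ := Filter.mem_pi.mp hW
  refine ⟨hIfin.toFinset, ?_⟩
  have key : ∀ g : CpZ X, (∀ x ∈ I, g x = 0) → ‖χ g‖ < 1 / 4 := by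
    intro g hg
    have hmem : (g : X → ℤ) ∈ Set.pi I t := by
      intro i hi
      have h0t : (0 : ℤ) ∈ t i := mem_of_mem_nhds (ht i)
      rw [show (g : X → ℤ) i = 0 from hg i hi]
      exact h0t
    exact hWsub (hsub hmem)
  intro f hf
  by_contra hne
  obtain ⟨k, hk⟩ := circ_amp hne
  have hvan : ∀ x ∈ I, (k • f) x = 0 := by
    intro x hx
    rw [CpZ.nsmul_apply, hf x (hIfin.mem_toFinset.mpr hx), smul_zero]
  have := key (k • f) hvan
  rw [map_nsmul] at this
  linarith

lemma exists_clopen_sep [T2Space X] (h0 : IsTopologicalBasis {s : Set X | IsClopen s})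
    {x : X} {S : Set X} (hS : S.Finite) (hx : x ∉ S) :
    ∃ A : Set X, IsClopen A ∧ x ∈ A ∧ A ∩ S = ∅ := by
  obtain ⟨A, hA, hxA, hsub⟩ :=
    h0.exists_subset_of_mem_open (Set.mem_compl hx) hS.isClosed.isOpen_compl
  exact ⟨A, hA, hxA,
    Set.eq_empty_iff_forall_notMem.mpr (fun y hy => (hsub hy.1) hy.2)⟩

lemma chi_vanish (χ : ContinuousAddMonoidHom (CpZ X) Circ) {F : Finset X}
    (hF : ∀ f : CpZ X, (∀ z ∈ F, f z = 0) → χ f = 0) {A : Set X} (hA : IsClopen A)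
    (hAF : A ∩ ↑F = ∅) : χ (indC A) = 0 := by
  refine hF _ (fun z hz => indC_of_not_mem hA (fun hzA => ?_))
  exact Set.eq_empty_iff_forall_notMem.mp hAF z ⟨hzA, Finset.mem_coe.mpr hz⟩

lemma chi_shrink (χ : ContinuousAddMonoidHom (CpZ X) Circ) {F : Finset X}
    (hF : ∀ f : CpZ X, (∀ z ∈ F, f z = 0) → χ f = 0) {A A' : Set X}
    (hA : IsClopen A) (hA' : IsClopen A') (hsub : A' ⊆ A) {x : X} (hx : x ∈ A')
    (hAF : A ∩ (↑F \ {x}) = ∅) : χ (indC A') = χ (indC A) := by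
  have hvan : ∀ z ∈ F, (indC A - indC A') z = 0 := by
    intro z hz
    rw [CpZ.sub_apply]
    by_cases hzx : z = x
    · subst hzx
      rw [indC_of_mem hA (hsub hx), indC_of_mem hA' hx, sub_self]
    · have hzA : z ∉ A := fun h =>
        Set.eq_empty_iff_forall_notMem.mp hAF z
          ⟨h, ⟨Finset.mem_coe.mpr hz, by simp [hzx]⟩⟩
      rw [indC_of_not_mem hA hzA, indC_of_not_mem hA' (fun h => hzA (hsub h)), sub_self]
  have h := hF _ hvan
  rw [map_sub, sub_eq_zero] at h
  exact h.symm

lemma exists_point [T2Space X] (h0 : IsTopologicalBasis {s : Set X | IsClopen s})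
    (χ : ContinuousAddMonoidHom (CpZ X) Circ) {F : Finset X}
    (hF : ∀ f : CpZ X, (∀ z ∈ F, f z = 0) → χ f = 0) (S : Finset X) (f : CpZ X)
    (hfS : ∀ x ∈ S, f x = 0) (hne : χ f ≠ 0) :
    ∃ x : X, x ∉ S ∧ ∃ E : Set X, IsClopen E ∧ x ∈ E ∧
      E ∩ (↑(F ∪ S) \ {x}) = ∅ ∧ χ (indC E) ≠ 0 := by
  classical
  set s : Finset X := F \ S with hsdef
  have sep : ∀ x : {y // y ∈ s}, ∃ E : Set X, IsClopen E ∧ x.1 ∈ E ∧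
      E ∩ (↑(F ∪ S) \ {x.1}) = ∅ := by
    intro x
    exact exists_clopen_sep h0 (Set.Finite.diff (F ∪ S).finite_toSet)
      (fun h => h.2 rfl)
  choose e he1 he2 he3 using sep
  set g : CpZ X := f - ∑ x ∈ s.attach, f x.1 • indC (e x) with hg
  have hterm0 : ∀ (z : X), z ∈ ↑(F ∪ S) → ∀ x : {y // y ∈ s}, z ≠ x.1 →
      indC (e x) z = 0 := by
    intro z hz x hzx
    refine indC_of_not_mem (he1 x) (fun hmem => ?_)
    exact Set.eq_empty_iff_forall_notMem.mp (he3 x) z ⟨hmem, ⟨hz, by simp [hzx]⟩⟩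
  have hgvan : ∀ z ∈ F, g z = 0 := by
    intro z hz
    have hzFS : (z : X) ∈ (↑(F ∪ S) : Set X) :=
      Finset.mem_coe.mpr (Finset.mem_union_left _ hz)
    rw [hg, CpZ.sub_apply, CpZ.sum_apply]
    by_cases hzS : z ∈ S
    · have hfz : f z = 0 := hfS z hzS
      have hall : ∀ x ∈ s.attach, (f x.1 • indC (e x)) z = 0 := by
        intro x _
        have hx1 : x.1 ∉ S := (Finset.mem_sdiff.mp x.2).2
        have hzx : z ≠ x.1 := fun h => hx1 (h ▸ hzS)
        rw [CpZ.zsmul_apply, hterm0 z hzFS x hzx, smul_zero]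
      rw [Finset.sum_congr rfl hall, Finset.sum_const_zero, hfz, sub_zero]
    · have hzs : z ∈ s := Finset.mem_sdiff.mpr ⟨hz, hzS⟩
      rw [Finset.sum_eq_single (⟨z, hzs⟩ : {y // y ∈ s})]
      · rw [CpZ.zsmul_apply, indC_of_mem (he1 ⟨z, hzs⟩) (he2 ⟨z, hzs⟩), smul_eq_mul,
          mul_one, sub_self]
      · intro x _ hxz
        have hzx : z ≠ x.1 := fun h => hxz (Subtype.ext h.symm)
        rw [CpZ.zsmul_apply, hterm0 z hzFS x hzx, smul_zero]
      · intro h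
        exact absurd (Finset.mem_attach _ _) h
  have hsum : χ f = ∑ x ∈ s.attach, f x.1 • χ (indC (e x)) := by
    have h1 : χ g = 0 := hF g hgvan
    have h2 : f = g + ∑ x ∈ s.attach, f x.1 • indC (e x) := by
      rw [hg]; abel
    calc χ f = χ (g + ∑ x ∈ s.attach, f x.1 • indC (e x)) := by conv_lhs => rw [h2]
      _ = χ g + χ (∑ x ∈ s.attach, f x.1 • indC (e x)) := map_add χ _ _
      _ = ∑ x ∈ s.attach, f x.1 • χ (indC (e x)) := by
          rw [h1, zero_add, map_sum]
          exact Finset.sum_congr rfl (fun x _ => map_zsmul χ _ _)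
  have hex : ∃ x ∈ s.attach, f x.1 • χ (indC (e x)) ≠ 0 := by
    by_contra hall
    push_neg at hall
    exact hne (by rw [hsum, Finset.sum_eq_zero hall])
  obtain ⟨x, _, hx⟩ := hex
  have hχe : χ (indC (e x)) ≠ 0 := fun h => hx (by rw [h, smul_zero])
  exact ⟨x.1, (Finset.mem_sdiff.mp x.2).2, e x, he1 x, he2 x, he3 x, hχe⟩

lemma final_contra {D : Set (ContinuousAddMonoidHom (CpZ X) Circ)} (hD : IsCompact D)
    (B : ℕ → Set X) (hcl : ∀ k, IsClopen (B k))
    (φ : ℕ → ContinuousAddMonoidHom (CpZ X) Circ) (hφD : ∀ k, φ k ∈ D)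
    (hne : ∀ k, φ k (indC (B k)) ≠ 0)
    (hpf : ∀ y : X, {k : ℕ | y ∈ B k}.Finite) : False := by
  classical
  have amp : ∀ k : ℕ, ∃ m : ℕ, (1 : ℝ) / 4 ≤ ‖φ k (m • indC (B k))‖ := by
    intro k
    obtain ⟨m, hm⟩ := circ_amp (hne k)
    exact ⟨m, by rw [map_nsmul]; exact hm⟩
  choose m hm using amp
  set g : ℕ → CpZ X := fun k => m k • indC (B k) with hgdef
  have hg0 : ∀ k (y : X), y ∉ B k → g k y = 0 := by
    intro k y hy
    show (m k • indC (B k)) y = 0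
    rw [CpZ.nsmul_apply, indC_of_not_mem (hcl k) hy, smul_zero]
  have htend : Filter.Tendsto g Filter.atTop (𝓝 (0 : CpZ X)) := by
    rw [nhds_induced (fun f : CpZ X => (f : X → ℤ)) 0, Filter.tendsto_comap_iff]
    rw [tendsto_pi_nhds]
    intro y
    obtain ⟨N, hN⟩ := (hpf y).bddAbove
    have hev : ∀ᶠ k in Filter.atTop, ((fun f : CpZ X => (f : X → ℤ)) ∘ g) k y = 0 := by
      filter_upwards [Filter.eventually_gt_atTop N] with k hk
      exact hg0 k y (fun hy => (hN hy).not_gt hk)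
    exact Filter.Tendsto.congr' (by filter_upwards [hev] with k hk; exact hk.symm)
      tendsto_const_nhds
  set K : Set (CpZ X) := insert 0 (Set.range g) with hK
  have hKc : IsCompact K := htend.isCompact_insert_range
  haveI : CompactSpace K := isCompact_iff_compactSpace.mp hKc
  set ρ : ContinuousAddMonoidHom (CpZ X) Circ → C(K, Circ) :=
    fun ψ => ContinuousMap.restrict K ψ.toContinuousMap with hρdef
  have hρc : Continuous ρ :=
    (ContinuousMap.continuous_restrict K).comp
      (ContinuousAddMonoidHom.isInducing_toContinuousMap _ _).continuous
  have hcover : ∀ ψ ∈ D, (ρ ⁻¹' Metric.ball (ρ ψ) (1 / 8)) ∈ 𝓝 ψ := by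
    intro ψ _
    exact ((Metric.isOpen_ball).preimage hρc).mem_nhds
      (by simp [Metric.mem_ball])
  obtain ⟨t, htD, hcov⟩ :=
    hD.elim_nhds_subcover (fun ψ => ρ ⁻¹' Metric.ball (ρ ψ) (1 / 8)) hcover
  have hsupp : ∀ ψ : ContinuousAddMonoidHom (CpZ X) Circ,
      ∃ F : Finset X, ∀ f : CpZ X, (∀ x ∈ F, f x = 0) → ψ f = 0 :=
    fun ψ => support_exists ψ
  choose FF hFF using hsupp
  set T : Finset X := t.biUnion FF with hT
  have hbad : (⋃ y ∈ (T : Set X), {k : ℕ | y ∈ B k}).Finite :=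
    Set.Finite.biUnion T.finite_toSet (fun y _ => hpf y)
  obtain ⟨k, hk⟩ := hbad.infinite_compl.nonempty
  have hkgood : ∀ y ∈ T, y ∉ B k := by
    intro y hy hyB
    exact hk (Set.mem_biUnion (Finset.mem_coe.mpr hy) hyB)
  have hψg : ∀ ψ ∈ t, ψ (g k) = 0 := by
    intro ψ hψ
    refine hFF ψ (g k) (fun y hy => hg0 k y (hkgood y ?_))
    exact Finset.mem_biUnion.mpr ⟨ψ, hψ, hy⟩
  have hφk := hcov (hφD k)
  rw [Set.mem_iUnion₂] at hφk
  obtain ⟨ψ, hψt, hmem⟩ := hφk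
  have hgK : g k ∈ K := Set.mem_insert_of_mem _ ⟨k, rfl⟩
  have hdist : dist (φ k (g k)) (ψ (g k)) < 1 / 8 := by
    have h1 : dist ((ρ (φ k)) ⟨g k, hgK⟩) ((ρ ψ) ⟨g k, hgK⟩) ≤ dist (ρ (φ k)) (ρ ψ) :=
      ContinuousMap.dist_apply_le_dist _
    have h2 : dist (ρ (φ k)) (ρ ψ) < 1 / 8 := by
      simpa [Metric.mem_ball, dist_comm] using hmem
    calc dist (φ k (g k)) (ψ (g k))
        = dist ((ρ (φ k)) ⟨g k, hgK⟩) ((ρ ψ) ⟨g k, hgK⟩) := rfl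
      _ ≤ dist (ρ (φ k)) (ρ ψ) := h1
      _ < 1 / 8 := h2
  rw [hψg ψ hψt, dist_zero_right] at hdist
  have h14 := hm k
  have : ‖φ k (g k)‖ = ‖φ k (m k • indC (B k))‖ := rfl
  rw [this] at hdist
  linarith

end Aux

/-- For a `0`-dimensional space `X`, every compact subset `D` of the dual group of
`C_p(X,ℤ)` (continuous characters with the compact-open topology) has finite support:
there is a finite `F ⊆ X` with `χ f = 0` whenever `χ ∈ D` and `f` vanishes on `F`. -/
theorem stmt16 (X : Type*) [TopologicalSpace X] [T2Space X]
    (h0 : IsTopologicalBasis {s : Set X | IsClopen s})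
    (D : Set (ContinuousAddMonoidHom (CpZ X) Circ)) (hD : IsCompact D) :
    ∃ F : Finset X, ∀ χ ∈ D, ∀ f : CpZ X, (∀ x ∈ F, f x = 0) → χ f = 0 := by
  classical
  by_contra hcon
  push_neg at hcon
  have hstep : ∀ s : Finset (ContinuousAddMonoidHom (CpZ X) Circ × Set X × Finset X),
      (∀ d ∈ s, d.1 ∈ D ∧ IsClopen d.2.1 ∧ d.1 (indC d.2.1) ≠ 0 ∧
        (∀ f : CpZ X, (∀ z ∈ d.2.2, f z = 0) → d.1 f = 0)) →
      ∃ y : ContinuousAddMonoidHom (CpZ X) Circ × Set X × Finset X,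
        (y.1 ∈ D ∧ IsClopen y.2.1 ∧ y.1 (indC y.2.1) ≠ 0 ∧
          (∀ f : CpZ X, (∀ z ∈ y.2.2, f z = 0) → y.1 f = 0)) ∧
        ∀ d ∈ s, ((y.2.1 ⊆ d.2.1 ∨ y.2.1 ∩ d.2.1 = ∅) ∧ y.2.1 ∩ ↑d.2.2 = ∅) := by
    intro s hs
    set S : Finset X := s.biUnion (fun d => d.2.2) with hS
    obtain ⟨χ, hχD, f, hfS, hfne⟩ := hcon S
    obtain ⟨F, hF⟩ := support_exists χ
    obtain ⟨x, hxS, E, hE, hxE, hEdisj, hχE⟩ := exists_point h0 χ hF S f hfS hfne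
    set A : Set X := E ∩ ⋂ d ∈ s, (if x ∈ d.2.1 then d.2.1 else d.2.1ᶜ) with hA
    have hclA : IsClopen A := by
      refine hE.inter (isClopen_biInter_finset (fun d hd => ?_))
      have hcl' : IsClopen d.2.1 := (hs d hd).2.1
      split_ifs
      exacts [hcl', hcl'.compl]
    have hxA : x ∈ A := by
      refine ⟨hxE, Set.mem_iInter₂.mpr (fun d hd => ?_)⟩
      split_ifs with h
      exacts [h, h]
    have hAE : A ⊆ E := Set.inter_subset_left
    have hEF : E ∩ (↑F \ {x}) = ∅ := by
      refine Set.eq_empty_iff_forall_notMem.mpr (fun y hy => ?_)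
      refine Set.eq_empty_iff_forall_notMem.mp hEdisj y ⟨hy.1, ⟨?_, hy.2.2⟩⟩
      exact Finset.mem_coe.mpr (Finset.mem_union_left _ (Finset.mem_coe.mp hy.2.1))
    have hχA : χ (indC A) = χ (indC E) := chi_shrink χ hF hE hclA hAE hxA hEF
    refine ⟨(χ, A, F), ⟨hχD, hclA, by rw [hχA]; exact hχE, hF⟩, ?_⟩
    intro d hd
    constructor
    · by_cases hxd : x ∈ d.2.1
      · left
        intro y hy
        have h2 := Set.mem_iInter₂.mp hy.2 d hd
        rwa [if_pos hxd] at h2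
      · right
        refine Set.eq_empty_iff_forall_notMem.mpr (fun y hy => ?_)
        have h2 := Set.mem_iInter₂.mp hy.1.2 d hd
        rw [if_neg hxd] at h2
        exact h2 hy.2
    · refine Set.eq_empty_iff_forall_notMem.mpr (fun y hy => ?_)
      have hyS : y ∈ S := Finset.subset_biUnion_of_mem (fun d => d.2.2) hd
        (Finset.mem_coe.mp hy.2)
      have hyE : y ∈ E := hAE hy.1
      have hyx : y ≠ x := fun h => hxS (h ▸ hyS)
      refine Set.eq_empty_iff_forall_notMem.mp hEdisj y ⟨hyE, ⟨?_, by simp [hyx]⟩⟩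
      exact Finset.mem_coe.mpr (Finset.mem_union_right _ hyS)
  obtain ⟨u, hP, hr⟩ := exists_seq_of_forall_finset_exists
    (fun d : ContinuousAddMonoidHom (CpZ X) Circ × Set X × Finset X =>
      d.1 ∈ D ∧ IsClopen d.2.1 ∧ d.1 (indC d.2.1) ≠ 0 ∧
        (∀ f : CpZ X, (∀ z ∈ d.2.2, f z = 0) → d.1 f = 0))
    (fun dm dn => (dn.2.1 ⊆ dm.2.1 ∨ dn.2.1 ∩ dm.2.1 = ∅) ∧ dn.2.1 ∩ ↑dm.2.2 = ∅)
    hstep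
  by_cases hcase : ∃ y : X, {n : ℕ | y ∈ (u n).2.1}.Infinite
  · obtain ⟨y, hy⟩ := hcase
    have hyI : (setOf (fun n => y ∈ (u n).2.1)).Infinite := hy
    set e : ℕ → ℕ := Nat.nth (fun n => y ∈ (u n).2.1) with he
    have hmem : ∀ k, y ∈ (u (e k)).2.1 := fun k => Nat.nth_mem_of_infinite hyI k
    have hmono : StrictMono e := Nat.nth_strictMono hyI
    have hchain : ∀ {j k : ℕ}, j ≤ k → (u (e k)).2.1 ⊆ (u (e j)).2.1 := by
      intro j k hjk
      rcases eq_or_lt_of_le hjk with h | h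
      · subst h; exact subset_rfl
      · rcases (hr (e j) (e k) (hmono h)).1 with h1 | h1
        · exact h1
        · exact absurd (Set.eq_empty_iff_forall_notMem.mp h1 y ⟨hmem k, hmem j⟩) (fun q => q)
    set B : ℕ → Set X := fun k => (u (e k)).2.1 \ (u (e (k+1))).2.1 with hB
    have hclB : ∀ k, IsClopen (B k) := by
      intro k
      show IsClopen ((u (e k)).2.1 \ (u (e (k+1))).2.1)
      rw [Set.diff_eq]
      exact ((hP (e k)).2.1).inter ((hP (e (k+1))).2.1).compl
    have hneB : ∀ k, (u (e k)).1 (indC (B k)) ≠ 0 := by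
      intro k
      have hsub : (u (e (k+1))).2.1 ⊆ (u (e k)).2.1 := hchain (Nat.le_succ k)
      show (u (e k)).1 (indC ((u (e k)).2.1 \ (u (e (k+1))).2.1)) ≠ 0
      rw [indC_diff (hP (e k)).2.1 (hP (e (k+1))).2.1 hsub, map_sub]
      have hz : (u (e k)).1 (indC ((u (e (k+1))).2.1)) = 0 :=
        chi_vanish _ (hP (e k)).2.2.2 (hP (e (k+1))).2.1
          (hr (e k) (e (k+1)) (hmono (Nat.lt_succ_self k))).2
      rw [hz, sub_zero]
      exact (hP (e k)).2.2.1
    have hpfB : ∀ y' : X, {k : ℕ | y' ∈ B k}.Finite := by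
      intro y'
      have hdisj : ∀ {j k : ℕ}, j < k → y' ∈ B j → y' ∈ B k → False := by
        intro j k h hj hk
        exact hj.2 (hchain (Nat.succ_le_of_lt h) hk.1)
      refine Set.Subsingleton.finite (fun j hj k hk => ?_)
      rcases lt_trichotomy j k with h | h | h
      · exact absurd (hdisj h hj hk) (fun q => q)
      · exact h
      · exact absurd (hdisj h hk hj) (fun q => q)
    exact final_contra hD B hclB (fun k => (u (e k)).1) (fun k => (hP (e k)).1) hneB hpfB
  · push_neg at hcase
    exact final_contra hD (fun n => (u n).2.1) (fun n => (hP n).2.1)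
      (fun n => (u n).1) (fun n => (hP n).1) (fun n => (hP n).2.2.1)
      (fun y => hcase y)
end

section
/- Let X be a 0-dimensional space. Then the evaluation map ℰ : C_p(X,ℤ) → (Ĉ_p(X,ℤ))^, defined by ℰ(g)(χ) = χ(g), is a topological group isomorphism of C_p(X,ℤ) onto its image; that is, ℰ is an injective continuous homomorphism into the bidual (both duals carrying the compact-open topology) which is open onto its image. -/
set_option maxHeartbeats 1000000
set_option synthInstance.maxHeartbeats 400000

open TopologicalSpace

namespace StmtAux
instance : Fact ((0:ℝ) < 1) := ⟨one_pos⟩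

lemma circ_norm_coe (x : ℝ) : ‖(x : Circ)‖ = |x - round x| := by
  rw [AddCircle.norm_eq]; norm_num

lemma circ_norm_small {x : ℝ} (h : |x| < 2⁻¹) : ‖(x : Circ)‖ = |x| := by
  have hr : round x = 0 := by
    rw [round_eq, Int.floor_eq_zero_iff]
    rw [abs_lt] at h
    constructor
    · linarith [h.1]
    · simpa using by linarith [h.2]
  rw [circ_norm_coe, hr]; norm_num

lemma circ_rep (t : Circ) : ∃ r : ℝ, (r : Circ) = t ∧ |r| ≤ 2⁻¹ ∧ ‖t‖ = |r| := by
  obtain ⟨x, rfl⟩ : ∃ x : ℝ, (x : Circ) = t := Quotient.exists_rep t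
  refine ⟨x - round x, ?_, by simpa using abs_sub_round x, (circ_norm_coe x)⟩
  have h0 : ((round x : ℝ) : Circ) = 0 := by
    rw [AddCircle.coe_eq_zero_iff]; exact ⟨round x, by simp⟩
  have : ((x - (round x : ℝ) : ℝ) : Circ) = (x : Circ) - ((round x : ℝ) : Circ) :=
    QuotientAddGroup.mk_sub _ _ _
  rw [this, h0, sub_zero]

lemma circ_exists_nsmul {t : Circ} (ht : t ≠ 0) : ∃ n : ℕ, 4⁻¹ ≤ ‖n • t‖ := by
  obtain ⟨r, hrt, hr2, hnorm⟩ := circ_rep t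
  have hr0 : r ≠ 0 := by rintro rfl; exact ht (by simpa using hrt.symm)
  have habs : 0 < |r| := abs_pos.mpr hr0
  rcases le_or_gt 4⁻¹ |r| with h | h
  · exact ⟨1, by rwa [one_smul, hnorm]⟩
  · have hex : ∃ n : ℕ, 4⁻¹ ≤ (n : ℝ) * |r| := by
      obtain ⟨n, hn⟩ := exists_nat_ge (4⁻¹ / |r|)
      exact ⟨n, by rw [div_le_iff₀ habs] at hn; linarith⟩
    classical
    set n := Nat.find hex with hn
    have hfind : 4⁻¹ ≤ (n : ℝ) * |r| := Nat.find_spec hex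
    have hn0 : n ≠ 0 := by
      intro h0
      rw [h0] at hfind; norm_num at hfind
    have hprev : ¬ (4⁻¹ ≤ ((n - 1 : ℕ) : ℝ) * |r|) := Nat.find_min hex (by omega)
    push_neg at hprev
    have hcast : ((n - 1 : ℕ) : ℝ) = (n : ℝ) - 1 := by
      have : 1 ≤ n := Nat.one_le_iff_ne_zero.mpr hn0
      push_cast [this]; ring
    have hlt : (n : ℝ) * |r| < 2⁻¹ := by
      rw [hcast] at hprev
      nlinarith
    refine ⟨n, ?_⟩
    have hsm : (n : ℕ) • t = ((n • r : ℝ) : Circ) := by rw [AddCircle.coe_nsmul, hrt]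
    have : ‖((n • r : ℝ) : Circ)‖ = |(n : ℝ) * r| := by
      rw [nsmul_eq_mul]
      refine circ_norm_small ?_
      rwa [abs_mul, Nat.abs_cast]
    rw [hsm, this, abs_mul, Nat.abs_cast]
    exact hfind

lemma circ_exists_zsmul_ge {n : ℤ} (hn : n ≠ 0) : ∃ a : Circ, 4⁻¹ ≤ ‖n • a‖ := by
  refine ⟨((1 / (2 * (n : ℝ))) : ℝ), ?_⟩
  have : n • (((1 / (2 * (n : ℝ))) : ℝ) : Circ) = (((2:ℝ)⁻¹ : ℝ) : Circ) := by
    rw [← AddCircle.coe_zsmul]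
    congr 1
    have : (n : ℝ) ≠ 0 := Int.cast_ne_zero.mpr hn
    simp only [zsmul_eq_mul]
    field_simp
  rw [this, circ_norm_coe]
  have : round ((2:ℝ)⁻¹) = 1 := by
    rw [round_eq]; norm_num
  rw [this]
  rw [show ((1:ℤ):ℝ) = 1 by norm_num, show (2:ℝ)⁻¹ - 1 = -2⁻¹ by ring, abs_neg]
  rw [abs_of_nonneg (by norm_num : (0:ℝ) ≤ 2⁻¹)]
  norm_num

lemma circ_zsmul_eq_zero {n : ℤ} (h : ∀ a : Circ, ‖n • a‖ < 4⁻¹) : n = 0 := by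
  by_contra hn
  obtain ⟨a, ha⟩ := circ_exists_zsmul_ge hn
  exact absurd (h a) (not_lt.mpr ha)


/-! ### CpZ basics -/

section CpZ
variable {X : Type*} [TopologicalSpace X]

lemma CpZ.zero_apply (x : X) : (0 : CpZ X) x = 0 := rfl
lemma CpZ.add_apply (f g : CpZ X) (x : X) : (f + g) x = f x + g x := rfl
lemma CpZ.sub_apply (f g : CpZ X) (x : X) : (f - g) x = f x - g x := rfl

/-- Evaluation as an additive homomorphism. -/
noncomputable def CpZ.evalHom (x : X) : CpZ X →+ ℤ where
  toFun := fun f => f x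
  map_zero' := rfl
  map_add' := fun _ _ => rfl

/-- Coercion as an additive homomorphism. -/
noncomputable def CpZ.coeHom : CpZ X →+ (X → ℤ) where
  toFun := fun f => (f : X → ℤ)
  map_zero' := rfl
  map_add' := fun _ _ => rfl

lemma CpZ.continuous_coe : Continuous (fun f : CpZ X => (f : X → ℤ)) :=
  continuous_induced_dom

instance : IsTopologicalAddGroup (CpZ X) :=
  topologicalAddGroup_induced (CpZ.coeHom (X := X))

lemma CpZ.continuous_eval (x : X) : Continuous (fun f : CpZ X => f x) :=
  (continuous_apply x).comp CpZ.continuous_coe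

lemma CpZ.isOpen_agree (F : Finset X) (g₀ : CpZ X) :
    IsOpen {g : CpZ X | ∀ x ∈ F, g x = g₀ x} := by
  have h : {g : CpZ X | ∀ x ∈ F, g x = g₀ x} = ⋂ x ∈ F, {g : CpZ X | g x = g₀ x} := by
    ext g; simp
  rw [h]
  refine isOpen_biInter_finset fun x _ => ?_
  exact (isOpen_discrete {g₀ x}).preimage (CpZ.continuous_eval x)

lemma CpZ.agree_mem_nhds (F : Finset X) (g₀ : CpZ X) :
    {g : CpZ X | ∀ x ∈ F, g x = g₀ x} ∈ nhds g₀ :=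
  (CpZ.isOpen_agree F g₀).mem_nhds (fun _ _ => rfl)

lemma CpZ.exists_finset_nhds {g₀ : CpZ X} {s : Set (CpZ X)} (hs : s ∈ nhds g₀) :
    ∃ F : Finset X, {g : CpZ X | ∀ x ∈ F, g x = g₀ x} ⊆ s := by
  rw [nhds_induced] at hs
  obtain ⟨t, ht, hsub⟩ := hs
  rw [nhds_pi] at ht
  obtain ⟨I, hIfin, w, hw, hsub'⟩ := Filter.mem_pi.mp ht
  refine ⟨hIfin.toFinset, fun g hg => hsub ?_⟩
  apply hsub'
  intro x hx
  show g x ∈ w x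
  rw [hg x (hIfin.mem_toFinset.mpr hx)]
  exact mem_of_mem_nhds (hw x)
end CpZ

/-! ### Indicator functions, separation -/

section Ind
variable {X : Type*} [TopologicalSpace X]

open Classical in
/-- Indicator function of a clopen set, as an element of `CpZ X`. -/
noncomputable def indC (U : Set X) (hU : IsClopen U) : CpZ X :=
  (⟨fun y => if y ∈ U then (1:ℤ) else 0, by
    refine IsLocallyConstant.continuous (fun s => ?_)
    by_cases h1 : (1:ℤ) ∈ s <;> by_cases h0 : (0:ℤ) ∈ s
    · convert isOpen_univ
      ext y; by_cases hy : y ∈ U <;> simp [hy, h1, h0]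
    · convert hU.isOpen
      ext y; by_cases hy : y ∈ U <;> simp [hy, h1, h0]
    · convert hU.compl.isOpen
      ext y; by_cases hy : y ∈ U <;> simp [hy, h1, h0]
    · convert isOpen_empty
      ext y; by_cases hy : y ∈ U <;> simp [hy, h1, h0]⟩ : C(X, ℤ))

open Classical in
lemma indC_apply (U : Set X) (hU : IsClopen U) (y : X) :
    indC U hU y = if y ∈ U then 1 else 0 := rfl

lemma indC_apply_mem {U : Set X} (hU : IsClopen U) {y : X} (hy : y ∈ U) :
    indC U hU y = 1 := by rw [indC_apply]; simp [hy]

lemma indC_apply_not_mem {U : Set X} (hU : IsClopen U) {y : X} (hy : y ∉ U) :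
    indC U hU y = 0 := by rw [indC_apply]; simp [hy]

variable [T2Space X]

lemma sep_pt (h0 : IsTopologicalBasis {s : Set X | IsClopen s}) {x y : X} (hxy : y ≠ x) : ∃ V : Set X, IsClopen V ∧ x ∈ V ∧ y ∉ V := by
  obtain ⟨u, v, hu, hv, hxu, hyv, huv⟩ := t2_separation hxy.symm
  obtain ⟨V, hV, hxV, hVu⟩ := h0.exists_subset_of_mem_open hxu hu
  exact ⟨V, hV, hxV, fun hyV => (huv.le_bot ⟨hVu hyV, hyv⟩)⟩

lemma sep_finset (h0 : IsTopologicalBasis {s : Set X | IsClopen s}) (x : X) (F : Finset X) :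
    ∃ V : Set X, IsClopen V ∧ x ∈ V ∧ ∀ y ∈ F, y ≠ x → y ∉ V := by
  classical
  induction F using Finset.induction with
  | empty => exact ⟨Set.univ, isClopen_univ, trivial, by simp⟩
  | @insert a F ha ih =>
    obtain ⟨V, hV, hxV, hVF⟩ := ih
    by_cases hax : a = x
    · exact ⟨V, hV, hxV, fun y hy hyx => by
        rcases Finset.mem_insert.mp hy with rfl | hy
        · exact absurd hax hyx
        · exact hVF y hy hyx⟩
    · obtain ⟨W, hW, hxW, haW⟩ := sep_pt h0 (Ne.intro hax)
      refine ⟨V ∩ W, hV.inter hW, ⟨hxV, hxW⟩, fun y hy hyx => ?_⟩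
      rcases Finset.mem_insert.mp hy with rfl | hy
      · exact fun hmem => haW hmem.2
      · exact fun hmem => hVF y hy hyx hmem.1

end Ind

/-! ### Duals and kill sets -/

section Dual
variable {X : Type*} [TopologicalSpace X]

/-- The dual group of `CpZ X`. -/
abbrev DualG (X : Type*) [TopologicalSpace X] : Type _ :=
  ContinuousAddMonoidHom (CpZ X) Circ

/-- `χ` is determined by values on `F`. -/
def Kills (χ : DualG X) (F : Finset X) : Prop :=
  ∀ f : CpZ X, (∀ x ∈ F, f x = 0) → χ f = 0

lemma kills_mono {χ : DualG X} {F F' : Finset X} (h : Kills χ F) (hFF : F ⊆ F') :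
    Kills χ F' := fun f hf => h f (fun x hx => hf x (hFF hx))

lemma kills_sub {χ : DualG X} {F : Finset X} (h : Kills χ F) {f g : CpZ X}
    (hfg : ∀ x ∈ F, f x = g x) : χ f = χ g := by
  have h1 : χ (f - g) = 0 := h _ (fun x hx => by
    rw [CpZ.sub_apply, hfg x hx, sub_self])
  have h2 : χ (f - g) = χ f - χ g := map_sub χ f g
  rw [h2] at h1
  exact sub_eq_zero.mp h1

lemma exists_kills (χ : DualG X) : ∃ F : Finset X, Kills χ F := by
  have hb : Metric.ball (0 : Circ) 4⁻¹ ∈ nhds (χ 0) := by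
    rw [map_zero]
    exact Metric.ball_mem_nhds _ (by norm_num)
  have hpre : (⇑χ) ⁻¹' Metric.ball (0 : Circ) 4⁻¹ ∈ nhds (0 : CpZ X) :=
    (map_continuous χ).continuousAt hb
  obtain ⟨F, hF⟩ := CpZ.exists_finset_nhds hpre
  refine ⟨F, fun f hf => ?_⟩
  by_contra hne
  obtain ⟨n, hn⟩ := circ_exists_nsmul hne
  have hmem : (n • f) ∈ {g : CpZ X | ∀ x ∈ F, g x = (0 : CpZ X) x} := by
    intro x hx
    have : (CpZ.evalHom x) (n • f) = n • (CpZ.evalHom x) f := map_nsmul _ _ _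
    show (n • f) x = (0 : CpZ X) x
    rw [CpZ.zero_apply]
    calc (n • f) x = (CpZ.evalHom x) (n • f) := rfl
      _ = n • (CpZ.evalHom x) f := this
      _ = n • f x := rfl
      _ = 0 := by rw [hf x hx]; simp
  have := hF hmem
  simp only [Set.mem_preimage, Metric.mem_ball, dist_zero_right] at this
  rw [map_nsmul] at this
  exact absurd this (not_lt.mpr hn)

/-- The character of `CpZ X` given by evaluation at `x` followed by rotation `a`. -/
noncomputable def pointChar (x : X) (a : Circ) : DualG X where
  toFun := fun f => f x • a
  map_zero' := by
    show (0 : CpZ X) x • a = 0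
    rw [CpZ.zero_apply, zero_zsmul]
  map_add' := fun f g => by
    show (f + g) x • a = f x • a + g x • a
    rw [CpZ.add_apply, add_zsmul]
  continuous_toFun := by
    exact (continuous_of_discreteTopology (f := fun n : ℤ => n • a)).comp
      (CpZ.continuous_eval x)

lemma pointChar_apply (x : X) (a : Circ) (f : CpZ X) : pointChar x a f = f x • a := rfl

lemma continuous_pointChar (x : X) : Continuous (fun a : Circ => pointChar x a) := by
  apply ContinuousAddMonoidHom.continuous_of_continuous_uncurry
  have h1 : Continuous fun p : Circ × CpZ X => ((p.2 x : ℤ), p.1) :=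
    ((CpZ.continuous_eval x).comp continuous_snd).prodMk continuous_fst
  exact continuous_smul.comp h1

end Dual

/-! ### Extraction of pairwise disjoint clopen neighborhoods -/

section LemA
variable {X : Type*} [TopologicalSpace X] [T2Space X]

/-- State for the recursive construction. -/
structure LAState (X : Type*) [TopologicalSpace X] (x : ℕ → X) where
  I : Set ℕ
  B : Set X
  hI : I.Infinite
  hB : IsClopen B
  hIB : ∀ i ∈ I, x i ∉ B

lemma LA_core (h0 : IsTopologicalBasis {s : Set X | IsClopen s})
    {x : ℕ → X} (hinj : Function.Injective x) {I : Set ℕ} (hI : I.Infinite) :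
    ∃ i₀ ∈ I, ∃ W : Set X, IsClopen W ∧ x i₀ ∈ W ∧
      {i ∈ I | x i ∉ W ∧ i₀ < i}.Infinite := by
  obtain ⟨j₀, hj₀⟩ := hI.nonempty
  by_cases hc : ∃ V : Set X, IsClopen V ∧ x j₀ ∈ V ∧ {i ∈ I | i ≠ j₀ ∧ x i ∉ V}.Infinite
  · obtain ⟨V, hV, hxV, hinf⟩ := hc
    refine ⟨j₀, hj₀, V, hV, hxV, ?_⟩
    have hsub : {i ∈ I | i ≠ j₀ ∧ x i ∉ V} \ {i | i ≤ j₀} ⊆ {i ∈ I | x i ∉ V ∧ j₀ < i} := by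
      rintro i ⟨⟨hiI, _, hiV⟩, hle⟩
      exact ⟨hiI, hiV, by simpa using hle⟩
    exact ((hinf.diff (Set.finite_Iic j₀)).mono hsub)
  · push_neg at hc
    obtain ⟨j₁, hj₁⟩ := (hI.diff (Set.finite_singleton j₀)).nonempty
    have hj₁I : j₁ ∈ I := hj₁.1
    have hne : j₁ ≠ j₀ := by simpa using hj₁.2
    obtain ⟨V, hV, hx1V, hx0V⟩ := sep_pt h0 (fun h => hne (hinj (by rw [h]))) (x := x j₁) (y := x j₀)
    have hfin : {i ∈ I | i ≠ j₀ ∧ x i ∉ Vᶜ}.Finite :=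
      (hc Vᶜ hV.compl hx0V)
    refine ⟨j₁, hj₁I, V, hV, hx1V, ?_⟩
    have hsub : I \ ({j₀} ∪ {i ∈ I | i ≠ j₀ ∧ x i ∉ Vᶜ} ∪ {i | i ≤ j₁}) ⊆
        {i ∈ I | x i ∉ V ∧ j₁ < i} := by
      rintro i ⟨hiI, hni⟩
      simp only [Set.mem_union, Set.mem_singleton_iff, Set.mem_setOf_eq, not_or] at hni
      obtain ⟨⟨hij0, hmid⟩, hle⟩ := hni
      refine ⟨hiI, ?_, by simpa using hle⟩
      intro hxiV
      exact hmid ⟨hiI, hij0, by simpa using hxiV⟩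
    exact (((hI.diff (((Set.finite_singleton j₀).union hfin).union (Set.finite_Iic j₁)))).mono hsub)

lemma LA_step (h0 : IsTopologicalBasis {s : Set X | IsClopen s})
    {x : ℕ → X} (hinj : Function.Injective x) (s : LAState X x) :
    ∃ p : LAState X x × ℕ × Set X,
      p.2.1 ∈ s.I ∧ IsClopen p.2.2 ∧ x p.2.1 ∈ p.2.2 ∧ Disjoint p.2.2 s.B ∧
      p.1.B = s.B ∪ p.2.2 ∧ p.1.I ⊆ s.I ∧ (∀ j ∈ p.1.I, p.2.1 < j) := by
  obtain ⟨i₀, hi₀I, W, hW, hxW, hinf⟩ := LA_core h0 hinj s.hI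
  have hsub : {i ∈ s.I | x i ∉ W ∧ i₀ < i} ⊆ s.I := fun i hi => hi.1
  refine ⟨⟨⟨{i ∈ s.I | x i ∉ W ∧ i₀ < i}, s.B ∪ (W ∩ s.Bᶜ), hinf,
      s.hB.union (hW.inter s.hB.compl), ?_⟩, i₀, W ∩ s.Bᶜ⟩, hi₀I,
      hW.inter s.hB.compl, ⟨hxW, s.hIB i₀ hi₀I⟩, ?_, rfl, hsub, fun j hj => hj.2.2⟩
  · rintro i ⟨hiI, hiW, _⟩ (hB | hWB)
    · exact s.hIB i hiI hB
    · exact hiW hWB.1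
  · exact Set.disjoint_left.mpr (fun a ha hb => ha.2 hb)

lemma lemA (h0 : IsTopologicalBasis {s : Set X | IsClopen s})
    {x : ℕ → X} (hinj : Function.Injective x) :
    ∃ (φ : ℕ → ℕ) (U : ℕ → Set X), StrictMono φ ∧ (∀ k, IsClopen (U k)) ∧
      (∀ k, x (φ k) ∈ U k) ∧ Pairwise (Function.onFun Disjoint U) := by
  classical
  set R : LAState X x → (LAState X x × ℕ × Set X) → Prop := fun s p =>
    p.2.1 ∈ s.I ∧ IsClopen p.2.2 ∧ x p.2.1 ∈ p.2.2 ∧ Disjoint p.2.2 s.B ∧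
      p.1.B = s.B ∪ p.2.2 ∧ p.1.I ⊆ s.I ∧ (∀ j ∈ p.1.I, p.2.1 < j) with hR
  have hstep : ∀ s : LAState X x, ∃ p, R s p := fun s => LA_step h0 hinj s
  choose next hnext using hstep
  set s₀ : LAState X x := ⟨Set.univ, ∅, Set.infinite_univ, isClopen_empty, by simp⟩ with hs₀
  set c : ℕ → LAState X x × ℕ × Set X := fun k => Nat.rec (next s₀) (fun _ p => next p.1) k with hc
  have hc0 : c 0 = next s₀ := rfl
  have hcs : ∀ k, c (k + 1) = next (c k).1 := fun k => rfl
  have hRc : ∀ k, R (c k).1 (c (k + 1)) := fun k => by rw [hcs k]; exact hnext _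
  refine ⟨fun k => (c k).2.1, fun k => (c k).2.2, ?_, ?_, ?_, ?_⟩
  · apply strictMono_nat_of_lt_succ
    intro k
    have h1 : (c (k + 1)).2.1 ∈ (c k).1.I := (hRc k).1
    -- elements of (c k).1.I are > (c k).2.1
    have h2 : ∀ j ∈ (c k).1.I, (c k).2.1 < j := by
      cases k with
      | zero => exact (hnext s₀).2.2.2.2.2.2
      | succ m => exact (hRc m).2.2.2.2.2.2
    exact h2 _ h1
  · intro k
    cases k with
    | zero => exact (hnext s₀).2.1
    | succ m => exact (hRc m).2.1
  · intro k
    cases k with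
    | zero => exact (hnext s₀).2.2.1
    | succ m => exact (hRc m).2.2.1
  · -- pairwise disjointness via the cumulative set B
    have hUB : ∀ k, (c k).2.2 ⊆ (c k).1.B := by
      intro k
      cases k with
      | zero => show (next s₀).2.2 ⊆ (next s₀).1.B
                rw [(hnext s₀).2.2.2.2.1]; exact Set.subset_union_right
      | succ m => rw [(hRc m).2.2.2.2.1]; exact Set.subset_union_right
    have hBmono : ∀ k, (c k).1.B ⊆ (c (k + 1)).1.B := by
      intro k
      rw [(hRc k).2.2.2.2.1]
      exact Set.subset_union_left
    have hBle' : ∀ m k : ℕ, (c m).1.B ⊆ (c (m + k)).1.B := by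
      intro m k
      induction k with
      | zero => exact subset_rfl
      | succ p ih => exact ih.trans (by rw [show m + (p+1) = (m+p) + 1 by omega]; exact hBmono (m+p))
    have hBle : ∀ {m n : ℕ}, m ≤ n → (c m).1.B ⊆ (c n).1.B := by
      intro m n hmn
      have := hBle' m (n - m)
      rwa [show m + (n - m) = n by omega] at this
    have key : ∀ {m n : ℕ}, m < n → Disjoint ((c n).2.2) ((c m).2.2) := by
      intro m n hmn
      have h1 : Disjoint ((c n).2.2) ((c (n - 1)).1.B) := by
        obtain ⟨p, rfl⟩ : ∃ p, n = p + 1 := ⟨n - 1, by omega⟩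
        simpa using (hRc p).2.2.2.1
      have h2 : (c m).2.2 ⊆ (c (n - 1)).1.B := (hUB m).trans (hBle (by omega))
      exact h1.mono_right h2
    intro m n hmn
    rcases lt_or_gt_of_ne hmn with h | h
    · exact (key h).symm
    · exact key h

end LemA

/-! ### Compact subsets of the dual have uniform finite support -/

section L2
variable {X : Type*} [TopologicalSpace X]

/-- Data produced when a finite set `A` fails to be a uniform kill set. -/
structure L2Data (K : Set (DualG X)) (A : Finset X) where
  χ : DualG X
  pt : X
  F : Finset X
  U : Set X
  hK : χ ∈ K
  hkills : Kills χ F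
  hAF : A ⊆ F
  hptF : pt ∈ F
  hptA : pt ∉ A
  hU : IsClopen U
  hptU : pt ∈ U
  hUF : ∀ z ∈ F, z ≠ pt → z ∉ U
  hne : χ (indC U hU) ≠ 0

variable [T2Space X]

lemma L2Data_exists (h0 : IsTopologicalBasis {s : Set X | IsClopen s})
    {K : Set (DualG X)} (h : ∀ F : Finset X, ∃ χ ∈ K, ¬ Kills χ F) (A : Finset X) :
    Nonempty (L2Data K A) := by
  classical
  obtain ⟨χ, hχK, hnk⟩ := h A
  rw [Kills] at hnk
  push_neg at hnk
  obtain ⟨f, hfA, hχf⟩ := hnk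
  obtain ⟨F₀, hF₀⟩ := exists_kills χ
  set F : Finset X := F₀ ∪ A with hF
  have hkills : Kills χ F := kills_mono hF₀ Finset.subset_union_left
  have hAF : A ⊆ F := Finset.subset_union_right
  have hWex : ∀ y : X, ∃ V : Set X, IsClopen V ∧ y ∈ V ∧ ∀ z ∈ F, z ≠ y → z ∉ V :=
    fun y => sep_finset h0 y F
  choose W hWc hWy hWF using hWex
  set g : CpZ X := ∑ y ∈ F \ A, f y • indC (W y) (hWc y) with hg
  have hgval : ∀ z ∈ F, g z = f z := by
    intro z hz
    have hev : g z = ∑ y ∈ F \ A, f y • (indC (W y) (hWc y) z) := by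
      calc g z = (CpZ.evalHom z) g := rfl
        _ = ∑ y ∈ F \ A, (CpZ.evalHom z) (f y • indC (W y) (hWc y)) := map_sum _ _ _
        _ = ∑ y ∈ F \ A, f y • (indC (W y) (hWc y) z) := by
            refine Finset.sum_congr rfl (fun y _ => ?_)
            exact map_zsmul (CpZ.evalHom z) _ _
    by_cases hzA : z ∈ A
    · have hzFA : z ∉ F \ A := fun hmem => (Finset.mem_sdiff.mp hmem).2 hzA
      rw [hev, Finset.sum_eq_zero, hfA z hzA]
      intro y hy
      have hzy : z ≠ y := fun h => hzFA (h ▸ hy)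
      rw [indC_apply_not_mem (hWc y) (hWF y z hz hzy), smul_zero]
    · have hzFA : z ∈ F \ A := Finset.mem_sdiff.mpr ⟨hz, hzA⟩
      rw [hev, Finset.sum_eq_single_of_mem z hzFA]
      · rw [indC_apply_mem (hWc z) (hWy z)]; simp
      · intro y hy hyz
        have : z ∉ W y := hWF y z hz (fun h => hyz (h.symm))
        rw [indC_apply_not_mem (hWc y) this, smul_zero]
  have hχg : χ g = χ f := kills_sub hkills hgval
  have hχgsum : χ g = ∑ y ∈ F \ A, f y • χ (indC (W y) (hWc y)) := by
    rw [hg]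
    rw [map_sum]
    refine Finset.sum_congr rfl (fun y _ => ?_)
    exact map_zsmul χ _ _
  have hsumne : ∑ y ∈ F \ A, f y • χ (indC (W y) (hWc y)) ≠ 0 := by
    rw [← hχgsum, hχg]; exact hχf
  obtain ⟨y, hy, hyne⟩ := Finset.exists_ne_zero_of_sum_ne_zero hsumne
  have hyF : y ∈ F := (Finset.mem_sdiff.mp hy).1
  have hyA : y ∉ A := (Finset.mem_sdiff.mp hy).2
  have hχind : χ (indC (W y) (hWc y)) ≠ 0 := fun h => hyne (by rw [h, smul_zero])
  exact ⟨⟨χ, y, F, W y, hχK, hkills, hAF, hyF, hyA, hWc y, hWy y, hWF y, hχind⟩⟩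

lemma uniform_kills (h0 : IsTopologicalBasis {s : Set X | IsClopen s})
    {K : Set (DualG X)} (hK : IsCompact K) :
    ∃ F : Finset X, ∀ χ ∈ K, Kills χ F := by
  classical
  by_contra hcon
  push_neg at hcon
  have hd : ∀ A : Finset X, L2Data K A := fun A => Classical.choice (L2Data_exists h0 hcon A)
  -- accumulated finite sets
  set accA : ℕ → Finset X := fun n => Nat.rec (∅ : Finset X) (fun _ A => (hd A).F) n with hacc
  have haccs : ∀ n, accA (n + 1) = (hd (accA n)).F := fun n => rfl
  set dta : ℕ → L2Data K (∅ : Finset X) := fun _ => hd ∅ with hdta0 -- dummy, unused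
  -- the data at step n
  have haccmono : ∀ n, accA n ⊆ accA (n + 1) := fun n => by
    rw [haccs n]; exact (hd (accA n)).hAF
  have haccle' : ∀ m k : ℕ, accA m ⊆ accA (m + k) := by
    intro m k
    induction k with
    | zero => exact subset_rfl
    | succ p ih =>
      exact ih.trans (by rw [show m + (p+1) = (m+p) + 1 by omega]; exact haccmono (m+p))
  have haccle : ∀ {m n : ℕ}, m ≤ n → accA m ⊆ accA n := by
    intro m n hmn
    have := haccle' m (n - m)
    rwa [show m + (n - m) = n by omega] at this
  set xpt : ℕ → X := fun n => (hd (accA n)).pt with hxpt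
  have hxptF : ∀ n, xpt n ∈ accA (n + 1) := fun n => by
    rw [haccs n]; exact (hd (accA n)).hptF
  have hxptA : ∀ n, xpt n ∉ accA n := fun n => (hd (accA n)).hptA
  have hinj : Function.Injective xpt := by
    intro m n hmn
    by_contra hne
    rcases lt_or_gt_of_ne hne with h | h
    · exact hxptA n (haccle h (hmn ▸ hxptF m))
    · exact hxptA m (haccle h (hmn ▸ hxptF n))
  obtain ⟨φ, V, hφ, hVclopen, hVmem, hVdisj⟩ := lemA h0 hinj
  -- shrink the clopen sets
  set U' : ℕ → Set X := fun k => (hd (accA (φ k))).U ∩ V k with hU'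
  have hU'c : ∀ k, IsClopen (U' k) := fun k => (hd (accA (φ k))).hU.inter (hVclopen k)
  have hU'mem : ∀ k, xpt (φ k) ∈ U' k := fun k => ⟨(hd (accA (φ k))).hptU, hVmem k⟩
  have hU'disj : Pairwise (Function.onFun Disjoint U') := by
    intro m n hmn
    exact ((hVdisj hmn).mono Set.inter_subset_right Set.inter_subset_right)
  -- nonzero values
  set a : ℕ → Circ := fun k => (hd (accA (φ k))).χ (indC (U' k) (hU'c k)) with ha
  have hane : ∀ k, a k ≠ 0 := by
    intro k
    have heq : (hd (accA (φ k))).χ (indC (U' k) (hU'c k)) =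
        (hd (accA (φ k))).χ (indC (hd (accA (φ k))).U (hd (accA (φ k))).hU) := by
      refine kills_sub (hd (accA (φ k))).hkills (fun z hz => ?_)
      by_cases hzp : z = xpt (φ k)
      · subst hzp
        rw [indC_apply_mem (hU'c k) (hU'mem k),
          indC_apply_mem (hd (accA (φ k))).hU (hd (accA (φ k))).hptU]
      · have hzU : z ∉ (hd (accA (φ k))).U := (hd (accA (φ k))).hUF z hz hzp
        rw [indC_apply_not_mem (hU'c k) (fun hmem => hzU hmem.1),
          indC_apply_not_mem (hd (accA (φ k))).hU hzU]
    intro hzero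
    have hzero' : (hd (accA (φ k))).χ (indC (U' k) (hU'c k)) = 0 := hzero
    exact (hd (accA (φ k))).hne (by rw [← heq, hzero'])
  choose m hm using fun k => circ_exists_nsmul (hane k)
  set f : ℕ → CpZ X := fun k => (m k) • indC (U' k) (hU'c k) with hf
  have hnormf : ∀ k, 4⁻¹ ≤ ‖(hd (accA (φ k))).χ (f k)‖ := by
    intro k
    rw [hf]
    have : (hd (accA (φ k))).χ ((m k) • indC (U' k) (hU'c k)) = (m k) • a k := by
      rw [ha]; exact map_nsmul _ _ _
    rw [this]
    exact hm k
  -- f tends to 0 pointwise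
  have htend : Filter.Tendsto f Filter.atTop (nhds (0 : CpZ X)) := by
    rw [nhds_induced, Filter.tendsto_comap_iff]
    rw [tendsto_pi_nhds]
    intro y
    have hfin : {k | (f k) y ≠ 0}.Finite := by
      refine Set.Finite.subset (Set.Subsingleton.finite (s := {k | y ∈ U' k}) ?_) ?_
      · intro k hk l hl
        by_contra hkl
        exact Set.disjoint_left.mp (hU'disj hkl) hk hl
      · intro k hk
        by_contra hyU
        apply hk
        have : (f k) y = (m k) • (indC (U' k) (hU'c k) y) := map_nsmul (CpZ.evalHom y) _ _
        rw [Set.mem_setOf_eq] at hyU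
        rw [this, indC_apply_not_mem (hU'c k) hyU, smul_zero]
    have hev : ∀ᶠ k in Filter.atTop, (f k) y = (0 : CpZ X) y := by
      rw [← Nat.cofinite_eq_atTop]
      exact hfin.eventually_cofinite_notMem.mono (fun k hk => not_not.mp hk)
    exact Filter.Tendsto.congr' (hev.mono fun k hk => hk.symm) tendsto_const_nhds
  -- the compact set C
  set C : Set (CpZ X) := insert (0 : CpZ X) (Set.range f) with hC
  have hCcomp : IsCompact C := htend.isCompact_insert_range
  haveI : CompactSpace ↥C := isCompact_iff_compactSpace.mp hCcomp
  set ρ : DualG X → C(↥C, Circ) := fun χ => ContinuousMap.restrict C χ.toContinuousMap with hρ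
  have hρcont : Continuous ρ :=
    (ContinuousMap.continuous_restrict C).comp
      (ContinuousAddMonoidHom.isInducing_toContinuousMap (CpZ X) Circ).continuous
  have hKimg : IsCompact (ρ '' K) := hK.image hρcont
  have hmemK : ∀ k, ρ ((hd (accA (φ k))).χ) ∈ ρ '' K :=
    fun k => Set.mem_image_of_mem _ (hd (accA (φ k))).hK
  haveI : MetricSpace C(↥C, Circ) := inferInstance
  obtain ⟨L, _, ψ, hψmono, hψtend⟩ := hKimg.isSeqCompact hmemK
  set z : ↥C := ⟨0, Set.mem_insert _ _⟩ with hz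
  set cj : ℕ → ↥C := fun j => ⟨f (ψ j), Set.mem_insert_of_mem _ (Set.mem_range_self _)⟩ with hcj
  have hLz : L z = 0 := by
    have h1 : Filter.Tendsto (fun j => (ρ ((hd (accA (φ (ψ j)))).χ)) z)
        Filter.atTop (nhds (L z)) :=
      ((continuous_eval_const z).tendsto L).comp hψtend
    have h2 : ∀ j, (ρ ((hd (accA (φ (ψ j)))).χ)) z = 0 := fun j => by
      show (hd (accA (φ (ψ j)))).χ (0 : CpZ X) = 0
      exact map_zero _
    rw [show (fun j => (ρ ((hd (accA (φ (ψ j)))).χ)) z) = (fun _ => (0 : Circ)) from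
      funext h2] at h1
    exact tendsto_nhds_unique h1 tendsto_const_nhds
  have hcj_tend : Filter.Tendsto cj Filter.atTop (nhds z) := by
    rw [hcj]
    apply tendsto_subtype_rng.mpr
    exact htend.comp hψmono.tendsto_atTop
  have hLcj : Filter.Tendsto (fun j => L (cj j)) Filter.atTop (nhds 0) := by
    rw [← hLz]
    exact (L.continuous.tendsto z).comp hcj_tend
  have hdistL : Filter.Tendsto (fun j => dist (ρ ((hd (accA (φ (ψ j)))).χ)) L)
      Filter.atTop (nhds 0) := tendsto_iff_dist_tendsto_zero.mp hψtend
  have hdistLcj : Filter.Tendsto (fun j => dist (L (cj j)) 0) Filter.atTop (nhds 0) := by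
    have := tendsto_iff_dist_tendsto_zero.mp hLcj
    exact this
  have hb : Filter.Tendsto (fun j => dist (ρ ((hd (accA (φ (ψ j)))).χ)) L +
      dist (L (cj j)) 0) Filter.atTop (nhds 0) := by
    have := hdistL.add hdistLcj
    simpa using this
  have hlow : ∀ j, 4⁻¹ ≤ dist (ρ ((hd (accA (φ (ψ j)))).χ)) L + dist (L (cj j)) 0 := by
    intro j
    have h1 : 4⁻¹ ≤ ‖(hd (accA (φ (ψ j)))).χ (f (ψ j))‖ := hnormf (ψ j)
    have h2 : (hd (accA (φ (ψ j)))).χ (f (ψ j)) = (ρ ((hd (accA (φ (ψ j)))).χ)) (cj j) := rfl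
    have h3 : ‖(ρ ((hd (accA (φ (ψ j)))).χ)) (cj j)‖ =
        dist ((ρ ((hd (accA (φ (ψ j)))).χ)) (cj j)) 0 := (dist_zero_right _).symm
    calc (4:ℝ)⁻¹ ≤ dist ((ρ ((hd (accA (φ (ψ j)))).χ)) (cj j)) 0 := by rw [← h3, ← h2]; exact h1
      _ ≤ dist ((ρ ((hd (accA (φ (ψ j)))).χ)) (cj j)) (L (cj j)) + dist (L (cj j)) 0 :=
          dist_triangle _ _ _
      _ ≤ dist (ρ ((hd (accA (φ (ψ j)))).χ)) L + dist (L (cj j)) 0 := by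
          gcongr
          exact ContinuousMap.dist_apply_le_dist _
  have : (4:ℝ)⁻¹ ≤ 0 := ge_of_tendsto hb (Filter.Eventually.of_forall hlow)
  norm_num at this

end L2

/-! ### The evaluation map into the bidual -/

section Final
variable {X : Type*} [TopologicalSpace X]

/-- The bidual group. -/
abbrev BidualG (X : Type*) [TopologicalSpace X] : Type _ :=
  ContinuousAddMonoidHom (DualG X) Circ

/-- The evaluation map into the bidual. -/
noncomputable def evalE (g : CpZ X) : BidualG X where
  toFun := fun χ => χ g
  map_zero' := rfl
  map_add' := fun _ _ => rfl
  continuous_toFun := continuous_eval_const g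

lemma evalE_apply (g : CpZ X) (χ : DualG X) : evalE g χ = χ g := rfl

lemma bidual_sub_apply (Φ Ψ : BidualG X) (χ : DualG X) : (Φ - Ψ) χ = Φ χ - Ψ χ := by
  rw [sub_eq_add_neg, sub_eq_add_neg]
  rfl

lemma isOpen_smallOn {K : Set (DualG X)} (hK : IsCompact K) :
    IsOpen {Ψ : BidualG X | ∀ χ ∈ K, ‖Ψ χ‖ < 4⁻¹} := by
  have heq : {Ψ : BidualG X | ∀ χ ∈ K, ‖Ψ χ‖ < 4⁻¹} =
      ContinuousAddMonoidHom.toContinuousMap ⁻¹'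
        {h : C(DualG X, Circ) | Set.MapsTo h K (Metric.ball 0 4⁻¹)} := by
    ext Ψ
    simp only [Set.mem_preimage, Set.mem_setOf_eq, Set.MapsTo, Metric.mem_ball,
      dist_zero_right]
    rfl
  rw [heq]
  exact (ContinuousMap.isOpen_setOf_mapsTo hK Metric.isOpen_ball).preimage
    (ContinuousAddMonoidHom.isInducing_toContinuousMap _ _).continuous

lemma zsmul_small_eq_zero {n : ℤ} (h : ∀ a : Circ, ‖n • a‖ < 4⁻¹) : n = 0 :=
  circ_zsmul_eq_zero h

lemma sub_zsmul_circ (m n : ℤ) (a : Circ) : (m - n) • a = m • a - n • a := by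
  rw [sub_eq_add_neg, add_zsmul, neg_zsmul, sub_eq_add_neg]

end Final

end StmtAux

open StmtAux in
/-- For a `0`-dimensional space `X`, the evaluation map of `C_p(X,ℤ)` into its bidual
(both duals carrying the compact-open topology) is an injective continuous homomorphism
which is open onto its image. -/
theorem stmt17 (X : Type*) [TopologicalSpace X] [T2Space X]
    (h0 : IsTopologicalBasis {s : Set X | IsClopen s}) :
    ∃ E : CpZ X → ContinuousAddMonoidHom (ContinuousAddMonoidHom (CpZ X) Circ) Circ,
      (∀ (g : CpZ X) (χ : ContinuousAddMonoidHom (CpZ X) Circ), E g χ = χ g) ∧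
      (∀ g₁ g₂ : CpZ X, E (g₁ + g₂) = E g₁ + E g₂) ∧
      Function.Injective E ∧ Continuous E ∧
      (∀ U : Set (CpZ X), IsOpen U →
        ∃ V : Set (ContinuousAddMonoidHom (ContinuousAddMonoidHom (CpZ X) Circ) Circ),
          IsOpen V ∧ E '' U = V ∩ Set.range E) := by
  classical
  refine ⟨fun g => evalE g, fun g χ => rfl, ?_, ?_, ?_, ?_⟩
  · -- additivity
    intro g₁ g₂
    ext χ
    show χ (g₁ + g₂) = evalE g₁ χ + evalE g₂ χ
    rw [evalE_apply, evalE_apply]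
    exact map_add χ g₁ g₂
  · -- injectivity
    intro g₁ g₂ h
    apply DFunLike.ext g₁ g₂
    intro x
    have hsmall : ∀ a : Circ, ‖(g₁ x - g₂ x) • a‖ < 4⁻¹ := by
      intro a
      have : evalE g₁ (pointChar x a) = evalE g₂ (pointChar x a) :=
        congrFun (congrArg (fun Φ : BidualG X => (Φ : DualG X → Circ)) h) _
      rw [evalE_apply, evalE_apply, pointChar_apply, pointChar_apply] at this
      rw [sub_zsmul_circ, this, sub_self, norm_zero]
      norm_num
    have := zsmul_small_eq_zero hsmall
    omega
  · -- continuity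
    apply (ContinuousAddMonoidHom.isInducing_toContinuousMap (DualG X) Circ).continuous_iff.mpr
    rw [continuous_iff_continuousAt]
    intro g₀
    have key : Filter.Tendsto
        (fun g : CpZ X => ((evalE g).toContinuousMap : C(DualG X, Circ)))
        (nhds g₀) (nhds ((evalE g₀).toContinuousMap : C(DualG X, Circ))) := by
      rw [ContinuousMap.tendsto_compactOpen_iff_forall]
      intro K hKc
      obtain ⟨F, hF⟩ := uniform_kills h0 hKc
      refine Filter.Tendsto.congr' ?_ tendsto_const_nhds
      refine Filter.eventuallyEq_of_mem (CpZ.agree_mem_nhds F g₀) (fun g hg => ?_)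
      ext ⟨χ, hχ⟩
      exact kills_sub (hF χ hχ) (fun x hx => (hg x hx).symm)
    exact key
  · -- openness onto the image
    intro U hU
    have hFex : ∀ g : CpZ X, ∃ F : Finset X,
        g ∈ U → {g' : CpZ X | ∀ x ∈ F, g' x = g x} ⊆ U := by
      intro g
      by_cases hg : g ∈ U
      · obtain ⟨F, hF⟩ := CpZ.exists_finset_nhds (hU.mem_nhds hg)
        exact ⟨F, fun _ => hF⟩
      · exact ⟨∅, fun h => absurd h hg⟩
    choose Fs hFs using hFex
    set KF : CpZ X → Set (DualG X) :=
      fun g => ⋃ x ∈ (Fs g : Finset X), Set.range (fun a : Circ => pointChar x a) with hKF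
    have hKFc : ∀ g, IsCompact (KF g) := by
      intro g
      refine (Fs g).finite_toSet.isCompact_biUnion (fun x _ => ?_)
      exact isCompact_range (continuous_pointChar x)
    set W : CpZ X → Set (BidualG X) :=
      fun g => {Φ : BidualG X | ∀ χ ∈ KF g, ‖Φ χ - evalE g χ‖ < 4⁻¹} with hW
    have hWopen : ∀ g, IsOpen (W g) := by
      intro g
      have h1 : W g = (fun Φ : BidualG X => Φ - evalE g) ⁻¹'
          {Ψ : BidualG X | ∀ χ ∈ KF g, ‖Ψ χ‖ < 4⁻¹} := by
        ext Φ
        simp only [Set.mem_preimage, Set.mem_setOf_eq, bidual_sub_apply, hW]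
      rw [h1]
      exact (isOpen_smallOn (hKFc g)).preimage (continuous_id.sub continuous_const)
    refine ⟨⋃ g ∈ U, W g, isOpen_biUnion (fun g _ => hWopen g), ?_⟩
    ext Φ
    constructor
    · rintro ⟨g', hg', rfl⟩
      refine ⟨Set.mem_biUnion hg' ?_, ⟨g', rfl⟩⟩
      intro χ _
      rw [sub_self, norm_zero]
      norm_num
    · rintro ⟨hΦV, g'', rfl⟩
      obtain ⟨g, hgU, hΦW⟩ := Set.mem_iUnion₂.mp hΦV
      have hagree : ∀ x ∈ Fs g, g'' x = g x := by
        intro x hx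
        have hsmall : ∀ a : Circ, ‖(g'' x - g x) • a‖ < 4⁻¹ := by
          intro a
          have hmem : pointChar x a ∈ KF g := Set.mem_biUnion hx ⟨a, rfl⟩
          have := hΦW (pointChar x a) hmem
          rw [evalE_apply, evalE_apply, pointChar_apply, pointChar_apply] at this
          rwa [sub_zsmul_circ]
        have := zsmul_small_eq_zero hsmall
        omega
      exact ⟨g'', hFs g hgU hagree, rfl⟩
end
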